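/- arXiv:1103.3224 — 6 statements merged into one kernel-verified Lean document; each statement's English description precedes it below -/
import Mathlib

section
/- Let K be a positive integer and N = 4K+1. If p_1, p_2 are nonnegative integers and q_1, q_2 are positive integers with p_1+p_2 = 2K, q_1+q_2 = 2N, and p_j/q_j ≥ K/N for j = 1,2, then p_1 = p_2 = K and q_1 = q_2 = N. -/
/-- Integrality step in the reduction of partition to fractional partition for `m = 2`:
with `N = 4K+1`, if nonnegative integers `p₁, p₂` and positive integers `q₁, q₂` satisfy
`p₁+p₂ = 2K`, `q₁+q₂ = 2N`, and `p_j/q_j ≥ K/N` for `j = 1,2`, then `p₁ = p₂ = K` and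
`q₁ = q₂ = N`. -/
theorem integrality_m2 (K N : ℕ) (hK : 0 < K) (hN : N = 4 * K + 1)
    (p₁ p₂ q₁ q₂ : ℕ) (hq₁ : 0 < q₁) (hq₂ : 0 < q₂)
    (hp : p₁ + p₂ = 2 * K) (hq : q₁ + q₂ = 2 * N)
    (h₁ : (p₁ : ℝ) / q₁ ≥ (K : ℝ) / N)
    (h₂ : (p₂ : ℝ) / q₂ ≥ (K : ℝ) / N) :
    p₁ = K ∧ p₂ = K ∧ q₁ = N ∧ q₂ = N := by
  have hN0 : 0 < N := by omega
  have hq₁' : (0:ℝ) < q₁ := by exact_mod_cast hq₁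
  have hq₂' : (0:ℝ) < q₂ := by exact_mod_cast hq₂
  have hN' : (0:ℝ) < N := by exact_mod_cast hN0
  have e₁ : (K:ℝ) * q₁ ≤ p₁ * N := by
    rw [ge_iff_le, div_le_div_iff₀ hN' hq₁'] at h₁; linarith
  have e₂ : (K:ℝ) * q₂ ≤ p₂ * N := by
    rw [ge_iff_le, div_le_div_iff₀ hN' hq₂'] at h₂; linarith
  have n₁ : K * q₁ ≤ p₁ * N := by exact_mod_cast e₁
  have n₂ : K * q₂ ≤ p₂ * N := by exact_mod_cast e₂
  have hsum : K * q₁ + K * q₂ = p₁ * N + p₂ * N := by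
    have : K * (q₁ + q₂) = (p₁ + p₂) * N := by rw [hp, hq]; ring
    nlinarith
  have eq₁ : K * q₁ = p₁ * N := by omega
  have eq₂ : K * q₂ = p₂ * N := by omega
  have hcop : Nat.Coprime N K := by
    rw [hN, show 4 * K + 1 = 1 + 4 * K by ring]
    exact (Nat.coprime_add_mul_right_left 1 K 4).mpr (Nat.coprime_one_left K)
  have hd₁ : N ∣ q₁ :=
    Nat.Coprime.dvd_of_dvd_mul_left hcop ⟨p₁, by rw [eq₁]; ring⟩
  have hq₁N : q₁ = N := by
    rcases hd₁ with ⟨c, hc⟩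
    have hc1 : 0 < c := by
      rcases Nat.eq_zero_or_pos c with h | h
      · subst h; omega
      · exact h
    have hc2 : N * c < N * 2 := by omega
    have : c < 2 := Nat.lt_of_mul_lt_mul_left hc2
    have hc3 : c = 1 := by omega
    rw [hc3, Nat.mul_one] at hc
    omega
  have hq₂N : q₂ = N := by omega
  have hp₁ : p₁ = K := by
    have := eq₁
    rw [hq₁N] at this
    exact Nat.eq_of_mul_eq_mul_right hN0 this.symm
  exact ⟨hp₁, by omega, hq₁N, hq₂N⟩
end

section
/- Let m ≥ 2 and K be positive integers and N = 2mK+1. If p_1,...,p_m are nonnegative integers and q_1,...,q_m are positive integers with p_1+⋯+p_m = mK, q_1+⋯+q_m = mN, and p_j/q_j ≥ K/N for every j = 1,...,m, then p_j = K and q_j = N for every j = 1,...,m. -/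
/-- Integrality step in the reduction of 3-partition to fractional partition:
with `N = 2mK+1`, if nonnegative integers `p_j` and positive integers `q_j` satisfy
`∑ p_j = mK`, `∑ q_j = mN`, and `p_j/q_j ≥ K/N` for every `j`, then `p_j = K` and
`q_j = N` for every `j`. -/
theorem integrality_general (m K N : ℕ) (hm : 2 ≤ m) (hK : 0 < K)
    (hN : N = 2 * m * K + 1)
    (p q : Fin m → ℕ) (hq : ∀ j, 0 < q j)
    (hp : ∑ j, p j = m * K) (hqsum : ∑ j, q j = m * N)
    (hge : ∀ j, (p j : ℝ) / q j ≥ (K : ℝ) / N) :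
    ∀ j, p j = K ∧ q j = N := by
  have hNpos : 0 < N := by omega
  -- pointwise: K * q j ≤ N * p j
  have key : ∀ j, K * q j ≤ N * p j := by
    intro j
    have hqj : (0:ℝ) < q j := by exact_mod_cast hq j
    have hNr : (0:ℝ) < N := by exact_mod_cast hNpos
    have := (div_le_div_iff₀ hNr hqj).mp (hge j)
    have : (K:ℝ) * q j ≤ (N:ℝ) * p j := by nlinarith
    exact_mod_cast this
  -- sums agree
  have hsum : ∑ j, N * p j = ∑ j, K * q j := by
    rw [← Finset.mul_sum, ← Finset.mul_sum, hp, hqsum]; ring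
  have heq : ∀ j, K * q j = N * p j := by
    have := (Finset.sum_eq_sum_iff_of_le (by intro i _; exact key i)).mp hsum.symm
    intro j; exact this j (Finset.mem_univ j)
  -- coprimality
  have hco : Nat.Coprime N K := by
    have : Nat.Coprime K N := by
      rw [hN]
      have : Nat.Coprime K (1 + K * (2 * m)) :=
        (Nat.coprime_add_mul_left_right K 1 (2 * m)).mpr (Nat.coprime_one_right K)
      convert this using 1
      ring
    exact this.symm
  have hdvd : ∀ j, N ∣ q j := by
    intro j
    have : N ∣ K * q j := ⟨p j, (heq j)⟩
    exact (Nat.Coprime.dvd_of_dvd_mul_left hco this)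
  have hqge : ∀ j, N ≤ q j := fun j => Nat.le_of_dvd (hq j) (hdvd j)
  have hqeq : ∀ j, q j = N := by
    have hsum2 : ∑ j : Fin m, (N:ℕ) = ∑ j, q j := by
      rw [hqsum]; simp [Finset.sum_const, mul_comm]
    have := (Finset.sum_eq_sum_iff_of_le (by intro i _; exact hqge i)).mp hsum2
    intro j; exact (this j (Finset.mem_univ j)).symm
  intro j
  have hq' := hqeq j
  have hp' : p j = K := by
    have h := heq j
    rw [hq'] at h
    have : N * K = N * p j := by rw [← h]; ring
    have := Nat.eq_of_mul_eq_mul_left hNpos this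
    omega
  exact ⟨hp', hq'⟩
end

section
/- Let m ≥ 2 and K be positive integers, N = 2mK+1, ε' = (−(2mN³+mKN−1) + √((2mN³+mKN−1)² + 8mN³))/(4mN²), and ε = 1/⌈1/ε'⌉. Then ε > 0 and K/N − 1/(mN²) < 2K/(2N+ε) − ε. -/
set_option maxHeartbeats 1000000 in
/-- With `N = 2mK+1`, `ε'` half of the positive root of
`mN²ε² + (2mN³+mKN−1)ε − 2N = 0`, and `ε = 1/⌈1/ε'⌉`, one has `ε > 0` and
`K/N − 1/(mN²) < 2K/(2N+ε) − ε`. -/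
theorem epsilon_choice_general (m K N : ℕ) (hm : 2 ≤ m) (hK : 0 < K)
    (hN : N = 2 * m * K + 1)
    (ε' ε : ℝ)
    (hε' : ε' = (-(2 * (m : ℝ) * (N : ℝ) ^ 3 + (m : ℝ) * (K : ℝ) * (N : ℝ) - 1)
        + Real.sqrt ((2 * (m : ℝ) * (N : ℝ) ^ 3 + (m : ℝ) * (K : ℝ) * (N : ℝ) - 1) ^ 2
            + 8 * (m : ℝ) * (N : ℝ) ^ 3)) / (4 * (m : ℝ) * (N : ℝ) ^ 2))
    (hε : ε = 1 / ((⌈1 / ε'⌉ : ℤ) : ℝ)) :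
    0 < ε ∧ (K : ℝ) / N - 1 / ((m : ℝ) * (N : ℝ) ^ 2)
      < 2 * (K : ℝ) / (2 * (N : ℝ) + ε) - ε := by
  have hm' : (2 : ℝ) ≤ (m : ℝ) := by exact_mod_cast hm
  have hK' : (1 : ℝ) ≤ (K : ℝ) := by exact_mod_cast hK
  have hNcast : (N : ℝ) = 2 * (m : ℝ) * (K : ℝ) + 1 := by rw [hN]; push_cast; ring
  have hN5 : (5 : ℝ) ≤ (N : ℝ) := by nlinarith
  have hN0 : (0 : ℝ) < (N : ℝ) := by linarith
  have hm0 : (0 : ℝ) < (m : ℝ) := by linarith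
  set a : ℝ := 2 * (m : ℝ) * (N : ℝ) ^ 3 + (m : ℝ) * (K : ℝ) * (N : ℝ) - 1 with ha_def
  have ha : 0 < a := by
    have : (1 : ℝ) ≤ (m : ℝ) * (K : ℝ) * (N : ℝ) := by nlinarith
    nlinarith [pow_pos hN0 3]
  set s : ℝ := Real.sqrt (a ^ 2 + 8 * (m : ℝ) * (N : ℝ) ^ 3) with hs_def
  have hs0 : 0 ≤ s := Real.sqrt_nonneg _
  have hs2 : s ^ 2 = a ^ 2 + 8 * (m : ℝ) * (N : ℝ) ^ 3 := by
    rw [hs_def, Real.sq_sqrt]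
    positivity
  have hsa : a < s := by nlinarith [pow_pos hN0 3]
  have hε'eq : ε' * (4 * (m : ℝ) * (N : ℝ) ^ 2) = s - a := by
    rw [hε']
    field_simp
    ring
  have hε'pos : 0 < ε' := by
    rw [hε']
    apply div_pos
    · linarith
    · positivity
  -- f(ε') < 0
  have hexpand : 16 * (m : ℝ) * (N : ℝ) ^ 2 *
      ((m : ℝ) * (N : ℝ) ^ 2 * ε' ^ 2 + a * ε' - 2 * (N : ℝ))
      = (s - a) ^ 2 + 4 * a * (s - a) - 32 * (m : ℝ) * (N : ℝ) ^ 3 := by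
    linear_combination (4 * (m : ℝ) * (N : ℝ) ^ 2 * ε' + s - a + 4 * a) * hε'eq
  have hkey' : (m : ℝ) * (N : ℝ) ^ 2 * ε' ^ 2 + a * ε' - 2 * (N : ℝ) < 0 := by
    have h1 : (s - a) ^ 2 + 4 * a * (s - a) - 32 * (m : ℝ) * (N : ℝ) ^ 3 < 0 := by
      nlinarith [mul_pos (sub_pos.mpr hsa) (by linarith : (0:ℝ) < 3 * s + a)]
    nlinarith [hexpand, mul_pos (mul_pos (by linarith : (0:ℝ) < 16 * (m:ℝ)) (pow_pos hN0 2)) (neg_pos.mpr h1)]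
  -- ε positivity and ε ≤ ε'
  have hc1 : 1 ≤ ⌈1 / ε'⌉ := Int.ceil_pos.mpr (one_div_pos.mpr hε'pos)
  have hc1' : (1 : ℝ) ≤ ((⌈1 / ε'⌉ : ℤ) : ℝ) := by exact_mod_cast hc1
  have hεpos : 0 < ε := by rw [hε]; positivity
  have hεle : ε ≤ ε' := by
    rw [hε]
    have h1 : 1 / ε' ≤ ((⌈1 / ε'⌉ : ℤ) : ℝ) := Int.le_ceil _
    calc 1 / ((⌈1 / ε'⌉ : ℤ) : ℝ) ≤ 1 / (1 / ε') :=
          one_div_le_one_div_of_le (one_div_pos.mpr hε'pos) h1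
      _ = ε' := one_div_one_div ε'
  -- f(ε) < 0
  have hkey : (m : ℝ) * (N : ℝ) ^ 2 * ε ^ 2 + a * ε - 2 * (N : ℝ) < 0 := by
    have hmN2 : (0 : ℝ) ≤ (m : ℝ) * (N : ℝ) ^ 2 := by positivity
    have h1 : (m : ℝ) * (N : ℝ) ^ 2 * ε ^ 2 ≤ (m : ℝ) * (N : ℝ) ^ 2 * ε' ^ 2 :=
      mul_le_mul_of_nonneg_left (pow_le_pow_left₀ hεpos.le hεle 2) hmN2
    have h2 : a * ε ≤ a * ε' := mul_le_mul_of_nonneg_left hεle ha.le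
    linarith
  refine ⟨hεpos, ?_⟩
  have h2N : (0 : ℝ) < 2 * (N : ℝ) + ε := by linarith
  have hmN2 : (0 : ℝ) < (m : ℝ) * (N : ℝ) ^ 2 := by positivity
  have e1 : (K : ℝ) / N - 1 / ((m : ℝ) * (N : ℝ) ^ 2)
      = ((m : ℝ) * (N : ℝ) * (K : ℝ) - 1) / ((m : ℝ) * (N : ℝ) ^ 2) := by
    rw [div_sub_div _ _ (ne_of_gt hN0) (ne_of_gt hmN2),
      div_eq_div_iff (by positivity) (ne_of_gt hmN2)]
    ring
  have e2 : 2 * (K : ℝ) / (2 * (N : ℝ) + ε) - ε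
      = (2 * (K : ℝ) - ε * (2 * (N : ℝ) + ε)) / (2 * (N : ℝ) + ε) := by
    rw [eq_div_iff (ne_of_gt h2N), sub_mul, div_mul_cancel₀ _ (ne_of_gt h2N)]
  rw [e1, e2, div_lt_div_iff₀ hmN2 h2N]
  rw [ha_def] at hkey
  linarith [hkey]
end

section
/- Let K, N, ε be positive real numbers. Let p ≥ 0, q ≥ 1, x ≥ 0, and 0 ≤ s ≤ ε be real numbers. If (p + xK + s)/(q + x(N+ε)) > 2K/(2N+ε), then p/q > 2K/(2N+ε) − ε. -/
/-- Converse direction estimate in the 3-partition reduction: if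
`(p + xK + s)/(q + x(N+ε)) > 2K/(2N+ε)` with `p ≥ 0`, `q ≥ 1`, `x ≥ 0`, `0 ≤ s ≤ ε`,
then `p/q > 2K/(2N+ε) − ε`. -/
theorem ratio_lower_bound_general (K N ε p q x s : ℝ)
    (hK : 0 < K) (hN : 0 < N) (hε : 0 < ε)
    (hp : 0 ≤ p) (hq : 1 ≤ q) (hx : 0 ≤ x) (hs0 : 0 ≤ s) (hsε : s ≤ ε)
    (hgt : (p + x * K + s) / (q + x * (N + ε)) > 2 * K / (2 * N + ε)) :
    p / q > 2 * K / (2 * N + ε) - ε := by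
  have hden : (0:ℝ) < 2 * N + ε := by linarith
  have hq0 : (0:ℝ) < q := by linarith
  have hQ : (0:ℝ) < q + x * (N + ε) := by nlinarith
  set R := 2 * K / (2 * N + ε) with hRdef
  have hR : R * (2 * N + ε) = 2 * K := by
    rw [hRdef, div_mul_cancel₀ _ hden.ne']
  have h1 : R * (q + x * (N + ε)) < p + x * K + s :=
    (lt_div_iff₀ hQ).mp hgt
  have hRN : R * N < K := by nlinarith
  have h2 : (R - ε) * q < p := by nlinarith
  exact (lt_div_iff₀ hq0).mpr h2
end

section
/- Let c_1,...,c_n be positive integers with c_1+⋯+c_n = 2K for a positive integer K. Let N = 4K+1, ε' = (−(4N³+2KN−N²−1) + √((4N³+2KN−N²−1)² + 16N³))/(8N²), ε = 1/⌈1/ε'⌉, and δ = 2ε/(5N−4n+1). Define rational families A, B indexed by {1,...,2N+2}: A consists of c_1,...,c_n, then δ repeated N+n−1 times, then 3δ/2 repeated N−2n+1 times, then K, K; B consists of 1 repeated 2N times, then N+ε, N+ε. Then there exists a subset J ⊆ {1,...,n} with Σ_{i∈J} c_i = K if and only if there exists a partition of {1,...,2N+2} into two disjoint nonempty subsets I_1,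 I_2 with union {1,...,2N+2} such that (Σ_{i∈I_j} A_i)/(Σ_{i∈I_j} B_i) = (2K+ε/2)/(2N+ε) for j = 1,2. -/
set_option maxHeartbeats 1000000

open Finset
lemma FPaux.card_filter_Ico (M k₁ k₂ : ℕ) (h : k₂ ≤ M) :
    ((Finset.univ : Finset (Fin M)).filter (fun i : Fin M => k₁ ≤ (i : ℕ) ∧ (i : ℕ) < k₂)).card
      = k₂ - k₁ := by
  rw [← Nat.card_Ico k₁ k₂]
  apply Finset.card_nbij (fun i : Fin M => (i : ℕ))
  · intro a ha
    simp only [mem_coe, mem_filter] at ha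
    simp [Finset.mem_Ico, ha.2.1, ha.2.2]
  · intro a _ b _ hab
    exact Fin.ext hab
  · intro m hm
    simp only [Finset.coe_Ico, Set.mem_Ico] at hm
    exact ⟨⟨m, lt_of_lt_of_le hm.2 h⟩, by simp [hm.1, hm.2], rfl⟩

def FPaux.emb (n N : ℕ) (h2n : 2 * n + 1 ≤ N) (j : Fin n) : Fin (2 * N + 2) :=
  ⟨(j : ℕ), by omega⟩

lemma FPaux.sum_c (n N : ℕ) (h2n : 2 * n + 1 ≤ N) (c : Fin n → ℕ) (f : Fin (2*N+2) → ℚ)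
    (hf : ∀ i : Fin (2*N+2), (h : (i:ℕ) < n) → f i = (c ⟨(i:ℕ), h⟩ : ℚ))
    (I : Finset (Fin (2 * N + 2))) :
    ∑ i ∈ I.filter (fun i : Fin (2*N+2) => (i : ℕ) < n), f i
      = ∑ j ∈ Finset.univ.filter (fun j : Fin n => FPaux.emb n N h2n j ∈ I), (c j : ℚ) := by
  refine Finset.sum_bij'
    (i := fun (a : Fin (2*N+2)) (ha : a ∈ I.filter (fun i : Fin (2*N+2) => (i : ℕ) < n)) =>
      (⟨(a : ℕ), (Finset.mem_filter.1 ha).2⟩ : Fin n))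
    (j := fun b _ => FPaux.emb n N h2n b) ?hi ?hj ?left ?right ?h
  case hi =>
    intro a ha
    simp only [Finset.mem_filter, Finset.mem_univ, true_and]
    have he : FPaux.emb n N h2n ⟨(a:ℕ), (Finset.mem_filter.1 ha).2⟩ = a := by
      apply Fin.ext; rfl
    rw [he]
    exact (Finset.mem_filter.1 ha).1
  case hj =>
    intro b hb
    simp only [Finset.mem_filter, Finset.mem_univ, true_and] at hb
    simp only [Finset.mem_filter]
    exact ⟨hb, b.isLt⟩
  case left =>
    intro a ha
    apply Fin.ext; rfl
  case right =>
    intro b hb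
    apply Fin.ext; rfl
  case h =>
    intro a ha
    exact hf a (Finset.mem_filter.1 ha).2

lemma FPaux.decompA (n N K : ℕ) (h2n : 2 * n + 1 ≤ N) (c : Fin n → ℕ) (δ : ℚ)
    (A : Fin (2 * N + 2) → ℚ)
    (hA : ∀ i : Fin (2 * N + 2),
      A i = if h : (i : ℕ) < n then (c ⟨(i : ℕ), h⟩ : ℚ)
        else if (i : ℕ) < n + (N + n - 1) then δ
        else if (i : ℕ) < 2 * N then 3 * δ / 2
        else (K : ℚ))
    (I : Finset (Fin (2 * N + 2))) :
    ∑ i ∈ I, A i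
      = (∑ j ∈ Finset.univ.filter (fun j : Fin n => FPaux.emb n N h2n j ∈ I), (c j : ℚ))
        + δ * (I.filter (fun i : Fin (2*N+2) => n ≤ (i:ℕ) ∧ (i:ℕ) < n + (N + n - 1))).card
        + 3 * δ / 2 * (I.filter (fun i : Fin (2*N+2) =>
            n + (N + n - 1) ≤ (i:ℕ) ∧ (i:ℕ) < 2 * N)).card
        + (K : ℚ) * (I.filter (fun i : Fin (2*N+2) => 2 * N ≤ (i:ℕ))).card := by
  classical
  have h1 := Finset.sum_filter_add_sum_filter_not I (fun i : Fin (2*N+2) => (i:ℕ) < n) A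
  have h2 := Finset.sum_filter_add_sum_filter_not
    (I.filter (fun i : Fin (2*N+2) => ¬ (i:ℕ) < n))
    (fun i : Fin (2*N+2) => (i:ℕ) < n + (N + n - 1)) A
  have h3 := Finset.sum_filter_add_sum_filter_not
    ((I.filter (fun i : Fin (2*N+2) => ¬ (i:ℕ) < n)).filter
      (fun i : Fin (2*N+2) => ¬ (i:ℕ) < n + (N + n - 1)))
    (fun i : Fin (2*N+2) => (i:ℕ) < 2 * N) A
  -- piece 1
  have p1 : ∑ i ∈ I.filter (fun i : Fin (2*N+2) => (i : ℕ) < n), A i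
      = ∑ j ∈ Finset.univ.filter (fun j : Fin n => FPaux.emb n N h2n j ∈ I), (c j : ℚ) := by
    apply FPaux.sum_c n N h2n c A _ I
    intro i h
    rw [hA i, dif_pos h]
  -- piece 2
  have p2 : ∑ i ∈ (I.filter (fun i : Fin (2*N+2) => ¬ (i:ℕ) < n)).filter
        (fun i : Fin (2*N+2) => (i:ℕ) < n + (N + n - 1)), A i
      = δ * (I.filter (fun i : Fin (2*N+2) => n ≤ (i:ℕ) ∧ (i:ℕ) < n + (N + n - 1))).card := by
    rw [Finset.filter_filter]
    have hset : I.filter (fun i : Fin (2*N+2) => ¬ (i:ℕ) < n ∧ (i:ℕ) < n + (N + n - 1))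
        = I.filter (fun i : Fin (2*N+2) => n ≤ (i:ℕ) ∧ (i:ℕ) < n + (N + n - 1)) := by
      apply Finset.filter_congr
      intro i _
      constructor <;> (intro h; omega)
    rw [hset]
    calc ∑ i ∈ I.filter (fun i : Fin (2*N+2) => n ≤ (i:ℕ) ∧ (i:ℕ) < n + (N + n - 1)), A i
        = ∑ _i ∈ I.filter (fun i : Fin (2*N+2) => n ≤ (i:ℕ) ∧ (i:ℕ) < n + (N + n - 1)), δ := by
          refine Finset.sum_congr rfl fun i hi => ?_
          simp only [Finset.mem_filter] at hi
          rw [hA i, dif_neg (by omega), if_pos hi.2.2]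
      _ = δ * (I.filter (fun i : Fin (2*N+2) => n ≤ (i:ℕ) ∧ (i:ℕ) < n + (N + n - 1))).card := by
          rw [Finset.sum_const, nsmul_eq_mul, mul_comm]
  -- piece 3
  have p3 : ∑ i ∈ ((I.filter (fun i : Fin (2*N+2) => ¬ (i:ℕ) < n)).filter
        (fun i : Fin (2*N+2) => ¬ (i:ℕ) < n + (N + n - 1))).filter
        (fun i : Fin (2*N+2) => (i:ℕ) < 2 * N), A i
      = 3 * δ / 2 * (I.filter (fun i : Fin (2*N+2) =>
            n + (N + n - 1) ≤ (i:ℕ) ∧ (i:ℕ) < 2 * N)).card := by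
    rw [Finset.filter_filter, Finset.filter_filter]
    have hset : I.filter (fun i : Fin (2*N+2) =>
          ¬ (i:ℕ) < n ∧ ¬ (i:ℕ) < n + (N + n - 1) ∧ (i:ℕ) < 2 * N)
        = I.filter (fun i : Fin (2*N+2) => n + (N + n - 1) ≤ (i:ℕ) ∧ (i:ℕ) < 2 * N) := by
      apply Finset.filter_congr
      intro i _
      constructor <;> (intro h; omega)
    rw [hset]
    calc ∑ i ∈ I.filter (fun i : Fin (2*N+2) => n + (N + n - 1) ≤ (i:ℕ) ∧ (i:ℕ) < 2 * N), A i
        = ∑ _i ∈ I.filter (fun i : Fin (2*N+2) => n + (N + n - 1) ≤ (i:ℕ) ∧ (i:ℕ) < 2 * N),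
            (3 * δ / 2) := by
          refine Finset.sum_congr rfl fun i hi => ?_
          simp only [Finset.mem_filter] at hi
          rw [hA i, dif_neg (by omega), if_neg (by omega), if_pos hi.2.2]
      _ = 3 * δ / 2 * (I.filter (fun i : Fin (2*N+2) =>
            n + (N + n - 1) ≤ (i:ℕ) ∧ (i:ℕ) < 2 * N)).card := by
          rw [Finset.sum_const, nsmul_eq_mul, mul_comm]
  -- piece 4
  have p4 : ∑ i ∈ ((I.filter (fun i : Fin (2*N+2) => ¬ (i:ℕ) < n)).filter
        (fun i : Fin (2*N+2) => ¬ (i:ℕ) < n + (N + n - 1))).filter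
        (fun i : Fin (2*N+2) => ¬ (i:ℕ) < 2 * N), A i
      = (K : ℚ) * (I.filter (fun i : Fin (2*N+2) => 2 * N ≤ (i:ℕ))).card := by
    rw [Finset.filter_filter, Finset.filter_filter]
    have hset : I.filter (fun i : Fin (2*N+2) =>
          ¬ (i:ℕ) < n ∧ ¬ (i:ℕ) < n + (N + n - 1) ∧ ¬ (i:ℕ) < 2 * N)
        = I.filter (fun i : Fin (2*N+2) => 2 * N ≤ (i:ℕ)) := by
      apply Finset.filter_congr
      intro i _
      constructor <;> (intro h; omega)
    rw [hset]
    calc ∑ i ∈ I.filter (fun i : Fin (2*N+2) => 2 * N ≤ (i:ℕ)), A i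
        = ∑ _i ∈ I.filter (fun i : Fin (2*N+2) => 2 * N ≤ (i:ℕ)), (K:ℚ) := by
          refine Finset.sum_congr rfl fun i hi => ?_
          simp only [Finset.mem_filter] at hi
          rw [hA i, dif_neg (by omega), if_neg (by omega), if_neg (by omega)]
      _ = (K:ℚ) * (I.filter (fun i : Fin (2*N+2) => 2 * N ≤ (i:ℕ))).card := by
          rw [Finset.sum_const, nsmul_eq_mul, mul_comm]
  linarith [h1, h2, h3, p1, p2, p3, p4]

lemma FPaux.decompB (N : ℕ) (ε : ℚ) (B : Fin (2 * N + 2) → ℚ)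
    (hB : ∀ i : Fin (2 * N + 2), B i = if (i : ℕ) < 2 * N then 1 else (N : ℚ) + ε)
    (I : Finset (Fin (2 * N + 2))) :
    ∑ i ∈ I, B i
      = ((I.filter (fun i : Fin (2*N+2) => (i:ℕ) < 2 * N)).card : ℚ)
        + ((N : ℚ) + ε) * (I.filter (fun i : Fin (2*N+2) => 2 * N ≤ (i:ℕ))).card := by
  classical
  have h1 := Finset.sum_filter_add_sum_filter_not I (fun i : Fin (2*N+2) => (i:ℕ) < 2 * N) B
  have p1 : ∑ i ∈ I.filter (fun i : Fin (2*N+2) => (i:ℕ) < 2 * N), B i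
      = ((I.filter (fun i : Fin (2*N+2) => (i:ℕ) < 2 * N)).card : ℚ) := by
    calc ∑ i ∈ I.filter (fun i : Fin (2*N+2) => (i:ℕ) < 2 * N), B i
        = ∑ _i ∈ I.filter (fun i : Fin (2*N+2) => (i:ℕ) < 2 * N), (1:ℚ) := by
          refine Finset.sum_congr rfl fun i hi => ?_
          simp only [Finset.mem_filter] at hi
          rw [hB i, if_pos hi.2]
      _ = _ := by rw [Finset.sum_const, nsmul_eq_mul, mul_one]
  have hset : I.filter (fun i : Fin (2*N+2) => ¬ (i:ℕ) < 2 * N)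
      = I.filter (fun i : Fin (2*N+2) => 2 * N ≤ (i:ℕ)) := by
    apply Finset.filter_congr
    intro i _
    constructor <;> (intro h; omega)
  have p2 : ∑ i ∈ I.filter (fun i : Fin (2*N+2) => ¬ (i:ℕ) < 2 * N), B i
      = ((N : ℚ) + ε) * (I.filter (fun i : Fin (2*N+2) => 2 * N ≤ (i:ℕ))).card := by
    rw [hset]
    calc ∑ i ∈ I.filter (fun i : Fin (2*N+2) => 2 * N ≤ (i:ℕ)), B i
        = ∑ _i ∈ I.filter (fun i : Fin (2*N+2) => 2 * N ≤ (i:ℕ)), ((N : ℚ) + ε) := by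
          refine Finset.sum_congr rfl fun i hi => ?_
          simp only [Finset.mem_filter] at hi
          rw [hB i, if_neg (by omega)]
      _ = _ := by rw [Finset.sum_const, nsmul_eq_mul, mul_comm]
  linarith [h1, p1, p2]

lemma FPaux.card_c (n N : ℕ) (h2n : 2 * n + 1 ≤ N) (I : Finset (Fin (2 * N + 2))) :
    (I.filter (fun i : Fin (2*N+2) => (i : ℕ) < n)).card
      = (Finset.univ.filter (fun j : Fin n => FPaux.emb n N h2n j ∈ I)).card := by
  refine Finset.card_bij'
    (i := fun (a : Fin (2*N+2)) (ha : a ∈ I.filter (fun i : Fin (2*N+2) => (i : ℕ) < n)) =>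
      (⟨(a : ℕ), (Finset.mem_filter.1 ha).2⟩ : Fin n))
    (j := fun b _ => FPaux.emb n N h2n b) ?hi ?hj ?left ?right
  case hi =>
    intro a ha
    simp only [Finset.mem_filter, Finset.mem_univ, true_and]
    have he : FPaux.emb n N h2n ⟨(a:ℕ), (Finset.mem_filter.1 ha).2⟩ = a := by
      apply Fin.ext; rfl
    rw [he]
    exact (Finset.mem_filter.1 ha).1
  case hj =>
    intro b hb
    simp only [Finset.mem_filter, Finset.mem_univ, true_and] at hb
    simp only [Finset.mem_filter]
    exact ⟨hb, b.isLt⟩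
  case left =>
    intro a ha
    apply Fin.ext; rfl
  case right =>
    intro b hb
    apply Fin.ext; rfl

lemma FPaux.card_small (n N : ℕ) (h2n : 2 * n + 1 ≤ N) (I : Finset (Fin (2 * N + 2))) :
    (I.filter (fun i : Fin (2*N+2) => (i:ℕ) < 2 * N)).card
      = (Finset.univ.filter (fun j : Fin n => FPaux.emb n N h2n j ∈ I)).card
        + (I.filter (fun i : Fin (2*N+2) => n ≤ (i:ℕ) ∧ (i:ℕ) < n + (N + n - 1))).card
        + (I.filter (fun i : Fin (2*N+2) =>
            n + (N + n - 1) ≤ (i:ℕ) ∧ (i:ℕ) < 2 * N)).card := by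
  classical
  have h1 := Finset.card_filter_add_card_filter_not
    (s := I.filter (fun i : Fin (2*N+2) => (i:ℕ) < 2 * N))
    (p := fun i : Fin (2*N+2) => (i : ℕ) < n)
  have h2 := Finset.card_filter_add_card_filter_not
    (s := (I.filter (fun i : Fin (2*N+2) => (i:ℕ) < 2 * N)).filter
      (fun i : Fin (2*N+2) => ¬ (i : ℕ) < n))
    (p := fun i : Fin (2*N+2) => (i : ℕ) < n + (N + n - 1))
  simp only [Finset.filter_filter] at h1 h2
  have e1 : I.filter (fun i : Fin (2*N+2) => (i:ℕ) < 2 * N ∧ (i:ℕ) < n)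
      = I.filter (fun i : Fin (2*N+2) => (i:ℕ) < n) := by
    apply Finset.filter_congr; intro i _; constructor <;> (intro h; omega)
  have e2 : I.filter (fun i : Fin (2*N+2) =>
        ((i:ℕ) < 2 * N ∧ ¬ (i:ℕ) < n) ∧ (i:ℕ) < n + (N + n - 1))
      = I.filter (fun i : Fin (2*N+2) => n ≤ (i:ℕ) ∧ (i:ℕ) < n + (N + n - 1)) := by
    apply Finset.filter_congr; intro i _; constructor <;> (intro h; omega)
  have e3 : I.filter (fun i : Fin (2*N+2) =>
        ((i:ℕ) < 2 * N ∧ ¬ (i:ℕ) < n) ∧ ¬ (i:ℕ) < n + (N + n - 1))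
      = I.filter (fun i : Fin (2*N+2) =>
        n + (N + n - 1) ≤ (i:ℕ) ∧ (i:ℕ) < 2 * N) := by
    apply Finset.filter_congr; intro i _; constructor <;> (intro h; omega)
  rw [e1] at h1
  rw [e2, e3] at h2
  rw [FPaux.card_c n N h2n I] at h1
  omega

lemma FPaux.step3 (N L u tt : ℕ) (R : ℤ) (ε : ℚ) (hε : 0 < ε)
    (hεL : 2 * (L : ℚ) * ε < 1) (hu : u ≤ L) (htt : tt ≤ 2) (hL : 0 < L)
    (E : 4 * (N : ℚ) * u + ε * (2 * (u : ℚ) - (L : ℚ) * tt) = (L : ℚ) * (R : ℚ)) :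
    R = 2 * N * tt := by
  set w : ℤ := (L : ℤ) * R - 4 * N * u with hwdef
  have hw : (w : ℚ) = ε * (2 * (u : ℚ) - (L : ℚ) * tt) := by
    push_cast [hwdef]; linear_combination -E
  have hbound : |(w : ℚ)| < 1 := by
    rw [hw, abs_mul, abs_of_pos hε]
    have h1 : |2 * (u : ℚ) - (L : ℚ) * tt| ≤ 2 * (L : ℚ) := by
      rw [abs_le]
      constructor
      · have : ((tt : ℚ)) ≤ 2 := by exact_mod_cast htt
        have h0 : (0:ℚ) ≤ (u:ℚ) := by positivity
        have hL0 : (0:ℚ) ≤ (L:ℚ) := by positivity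
        nlinarith
      · have h2 : (u : ℚ) ≤ (L : ℚ) := by exact_mod_cast hu
        have h0 : (0:ℚ) ≤ (L:ℚ) * tt := by positivity
        nlinarith
    calc ε * |2 * (u : ℚ) - (L : ℚ) * tt| ≤ ε * (2 * L) := by
          exact mul_le_mul_of_nonneg_left h1 hε.le
      _ < 1 := by linarith
  have hw0 : w = 0 := by
    have h5 : |w| < 1 := by exact_mod_cast hbound
    rw [abs_lt] at h5
    omega
  have h2u : 2 * u = L * tt := by
    have := hw
    rw [hw0] at this
    have h0 : (2 * (u : ℚ) - (L : ℚ) * tt) = 0 := by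
      rcases mul_eq_zero.1 this.symm with h | h
      · exact absurd h hε.ne'
      · exact h
    have : (2 * (u : ℚ)) = (L : ℚ) * tt := by linarith
    exact_mod_cast this
  have : (L : ℤ) * R = (L : ℤ) * (2 * N * tt) := by
    have h4 : (L:ℤ) * R = 4 * N * u := by omega
    rw [h4]
    have : (2 * u : ℤ) = L * tt := by exact_mod_cast h2u
    ring_nf
    nlinarith [this]
  exact mul_left_cancel₀ (by exact_mod_cast hL.ne' : (L:ℤ) ≠ 0) this

lemma FPaux.per_part (n N K L : ℕ) (hK : 0 < K) (hN : N = 4 * K + 1)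
    (hL : L + 4 * n = 5 * N + 1) (hn : 1 ≤ n)
    (ε : ℚ) (hε : 0 < ε) (hεsmall : 3 * (N : ℚ) ^ 2 * ε ≤ 1)
    (C s u t : ℕ) (hC : C ≤ 2 * K) (hs : s ≤ 2 * N) (hu : u ≤ L) (ht : t ≤ 2)
    (master : ((L : ℚ) * C + ε * u + (L : ℚ) * K * t) * (4 * (N : ℚ) + 2 * ε)
      = (4 * (K : ℚ) + ε) * ((L : ℚ) * s + (L : ℚ) * N * t + (L : ℚ) * ε * t)) :
    (t = 0 → s = 0) ∧ (t = 1 → C = K ∧ s = N) := by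
  have hN5 : 5 ≤ N := by omega
  have hL1 : 1 ≤ L := by omega
  have hL5 : L ≤ 5 * N := by omega
  have hNq : (5 : ℚ) ≤ (N : ℚ) := by exact_mod_cast hN5
  have hLq1 : (1 : ℚ) ≤ (L : ℚ) := by exact_mod_cast hL1
  have hLq5 : (L : ℚ) ≤ 5 * (N : ℚ) := by exact_mod_cast hL5
  have hCq : (C : ℚ) ≤ 2 * (K : ℚ) := by exact_mod_cast hC
  have hsq : (s : ℚ) ≤ 2 * (N : ℚ) := by exact_mod_cast hs
  have huq : (u : ℚ) ≤ (L : ℚ) := by exact_mod_cast hu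
  have htq : (t : ℚ) ≤ 2 := by exact_mod_cast ht
  have hKNq : (N : ℚ) = 4 * (K : ℚ) + 1 := by exact_mod_cast hN
  have hC0 : (0:ℚ) ≤ (C:ℚ) := by positivity
  have hs0 : (0:ℚ) ≤ (s:ℚ) := by positivity
  have hu0 : (0:ℚ) ≤ (u:ℚ) := by positivity
  have ht0 : (0:ℚ) ≤ (t:ℚ) := by positivity
  have hLq0 : (0:ℚ) ≤ (L:ℚ) := by linarith
  have hNq0 : (0:ℚ) ≤ (N:ℚ) := by linarith
  have hKq0 : (0:ℚ) ≤ (K:ℚ) := by positivity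
  have hNε : (N : ℚ) * ε ≤ 1 / 15 := by
    nlinarith [mul_nonneg (mul_nonneg (by linarith : (0:ℚ) ≤ (N:ℚ) - 5) hNq0) hε.le]
  have hε1 : ε ≤ 1 / 75 := by nlinarith
  set Dq : ℚ := 2 * (C:ℚ) - 2 * (K:ℚ) * t - (s:ℚ) - (N:ℚ) * t with hDq
  set Aq : ℚ := 4 * (N:ℚ) * u + (L:ℚ) * Dq with hAq
  set Bq : ℚ := 2 * (u:ℚ) - (L:ℚ) * t with hBq
  set z : ℤ := (N : ℤ) * C - (K : ℤ) * s with hz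
  have key : 4 * (L : ℚ) * (z : ℚ) + ε * Aq + ε ^ 2 * Bq = 0 := by
    rw [hAq, hBq, hz, hDq]
    push_cast
    linear_combination master
  -- bounds on Dq, Aq, Bq
  have hDub : Dq ≤ (N:ℚ) := by
    rw [hDq]
    have h1 : (0:ℚ) ≤ (K:ℚ) * t := mul_nonneg hKq0 ht0
    have h2 : (0:ℚ) ≤ (N:ℚ) * t := mul_nonneg hNq0 ht0
    linarith
  have hDlb : -(5 * (N:ℚ)) ≤ Dq := by
    rw [hDq]
    have h1 : (K:ℚ) * t ≤ (K:ℚ) * 2 := mul_le_mul_of_nonneg_left htq hKq0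
    have h2 : (N:ℚ) * t ≤ (N:ℚ) * 2 := mul_le_mul_of_nonneg_left htq hNq0
    linarith
  have hAub : Aq ≤ 5 * (N:ℚ) * L := by
    rw [hAq]
    have h1 : 4 * (N:ℚ) * u ≤ 4 * (N:ℚ) * L :=
      mul_le_mul_of_nonneg_left huq (by positivity)
    have h2 : (L:ℚ) * Dq ≤ (L:ℚ) * N := mul_le_mul_of_nonneg_left hDub hLq0
    linarith
  have hAlb : -(5 * (N:ℚ) * L) ≤ Aq := by
    rw [hAq]
    have h1 : (0:ℚ) ≤ 4 * (N:ℚ) * u := by positivity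
    have h2 : (L:ℚ) * (-(5 * (N:ℚ))) ≤ (L:ℚ) * Dq := mul_le_mul_of_nonneg_left hDlb hLq0
    linarith
  have hBub : Bq ≤ 2 * (L:ℚ) := by
    rw [hBq]
    have h1 : (0:ℚ) ≤ (L:ℚ) * t := mul_nonneg hLq0 ht0
    linarith
  have hBlb : -(2 * (L:ℚ)) ≤ Bq := by
    rw [hBq]
    have h1 : (L:ℚ) * t ≤ (L:ℚ) * 2 := mul_le_mul_of_nonneg_left htq hLq0
    linarith
  have hE5 : ε * (5 * (N:ℚ) * L) ≤ (1/3) * (L:ℚ) := by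
    nlinarith [mul_le_mul_of_nonneg_left hNε (by linarith : (0:ℚ) ≤ 5 * (L:ℚ))]
  have hεsq : ε ^ 2 ≤ ε := by nlinarith
  have h5 : ε ^ 2 * (2 * (L:ℚ)) ≤ ε * (2 * (L:ℚ)) :=
    mul_le_mul_of_nonneg_right hεsq (by linarith)
  have h6 : ε * (2 * (L:ℚ)) ≤ (1/75) * (2 * (L:ℚ)) :=
    mul_le_mul_of_nonneg_right hε1 (by linarith)
  have hEub : ε * Aq + ε ^ 2 * Bq ≤ 2 * (L:ℚ) := by
    have h1 : ε * Aq ≤ ε * (5 * (N:ℚ) * L) := mul_le_mul_of_nonneg_left hAub hε.le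
    have h3 : ε ^ 2 * Bq ≤ ε ^ 2 * (2 * L) :=
      mul_le_mul_of_nonneg_left hBub (sq_nonneg ε)
    linarith
  have hElb : -(2 * (L:ℚ)) ≤ ε * Aq + ε ^ 2 * Bq := by
    have h1 : ε * (-(5 * (N:ℚ) * L)) ≤ ε * Aq := mul_le_mul_of_nonneg_left hAlb hε.le
    have h2 : (-(1/3) : ℚ) * (L:ℚ) ≤ ε * (-(5 * (N:ℚ) * L)) := by nlinarith [hE5]
    have h3 : ε ^ 2 * (-(2 * (L:ℚ))) ≤ ε ^ 2 * Bq :=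
      mul_le_mul_of_nonneg_left hBlb (sq_nonneg ε)
    have h4 : (0:ℚ) ≤ ε ^ 2 * (2 * (L:ℚ)) := by positivity
    linarith
  have hzub : 4 * (L:ℚ) * (z:ℚ) ≤ 2 * (L:ℚ) := by linarith
  have hzlb : -(2 * (L:ℚ)) ≤ 4 * (L:ℚ) * (z:ℚ) := by linarith
  have hz0 : z = 0 := by
    have h1 : z < 1 := by
      by_contra h
      push_neg at h
      have hc : (1:ℚ) ≤ (z:ℚ) := by exact_mod_cast h
      linarith [mul_le_mul_of_nonneg_left hc (by linarith : (0:ℚ) ≤ 4 * (L:ℚ))]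
    have h2 : -1 < z := by
      by_contra h
      push_neg at h
      have hc : (z:ℚ) ≤ -1 := by exact_mod_cast h
      linarith [mul_le_mul_of_nonneg_left hc (by linarith : (0:ℚ) ≤ 4 * (L:ℚ))]
    omega
  have hNCKs : N * C = K * s := by
    have h : ((N * C : ℕ) : ℤ) = ((K * s : ℕ) : ℤ) := by push_cast; omega
    exact_mod_cast h
  have key2 : Aq + ε * Bq = 0 := by
    have h0 : ε * (Aq + ε * Bq) = ε * 0 := by
      rw [hz0] at key; push_cast at key; linear_combination key
    exact mul_left_cancel₀ hε.ne' h0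
  rw [hAq, hBq, hDq] at key2
  have hcop : Nat.Coprime N K := by
    rw [hN]
    exact (Nat.coprime_mul_right_add_left 1 K 4).mpr (Nat.coprime_one_left K)
  have hdvd : N ∣ s := by
    refine hcop.dvd_of_dvd_mul_left ⟨C, ?_⟩
    omega
  obtain ⟨q, hq⟩ := hdvd
  have hq2 : q ≤ 2 := by
    have h : N * q ≤ N * 2 := by omega
    exact Nat.le_of_mul_le_mul_left h (by omega)
  have hεL2 : 2 * (L : ℚ) * ε < 1 := by nlinarith
  constructor
  · -- t = 0
    intro ht0'
    subst ht0'
    interval_cases q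
    · omega
    · exfalso
      have hCK : C = K := by
        have h : N * C = N * K := by rw [hNCKs, hq]; ring
        exact Nat.eq_of_mul_eq_mul_left (by omega) h
      have E : 4 * (N : ℚ) * u + ε * (2 * (u : ℚ) - (L : ℚ) * ((0:ℕ):ℚ))
          = (L : ℚ) * (((N : ℤ) - 2 * K : ℤ) : ℚ) := by
        rw [hCK, hq] at key2
        push_cast at key2 ⊢
        linear_combination key2
      have := FPaux.step3 N L u 0 ((N : ℤ) - 2 * K) ε hε hεL2 hu (by omega) (by omega) E
      omega
    · exfalso
      have hCK : C = 2 * K := by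
        have h : N * C = N * (2 * K) := by rw [hNCKs, hq]; ring
        exact Nat.eq_of_mul_eq_mul_left (by omega) h
      have E : 4 * (N : ℚ) * u + ε * (2 * (u : ℚ) - (L : ℚ) * ((0:ℕ):ℚ))
          = (L : ℚ) * ((2 * (N : ℤ) - 4 * K : ℤ) : ℚ) := by
        rw [hCK, hq] at key2
        push_cast at key2 ⊢
        linear_combination key2
      have := FPaux.step3 N L u 0 (2 * (N : ℤ) - 4 * K) ε hε hεL2 hu (by omega) (by omega) E
      omega
  · -- t = 1
    intro ht1
    subst ht1
    interval_cases q
    · exfalso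
      have hs0' : s = 0 := by omega
      have hC0' : C = 0 := by
        rw [hs0'] at hNCKs
        have hN0 : 0 < N := by omega
        simp at hNCKs
        omega
      have E : 4 * (N : ℚ) * u + ε * (2 * (u : ℚ) - (L : ℚ) * ((1:ℕ):ℚ))
          = (L : ℚ) * ((2 * (K : ℤ) + N : ℤ) : ℚ) := by
        rw [hC0', hs0'] at key2
        push_cast at key2 ⊢
        linear_combination key2
      have := FPaux.step3 N L u 1 (2 * (K : ℤ) + N) ε hε hεL2 hu (by omega) (by omega) E
      omega
    · have hCK : C = K := by
        have h : N * C = N * K := by rw [hNCKs, hq]; ring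
        exact Nat.eq_of_mul_eq_mul_left (by omega) h
      exact ⟨hCK, by omega⟩
    · exfalso
      have hCK : C = 2 * K := by
        have h : N * C = N * (2 * K) := by rw [hNCKs, hq]; ring
        exact Nat.eq_of_mul_eq_mul_left (by omega) h
      have E : 4 * (N : ℚ) * u + ε * (2 * (u : ℚ) - (L : ℚ) * ((1:ℕ):ℚ))
          = (L : ℚ) * ((3 * (N : ℤ) - 2 * K : ℤ) : ℚ) := by
        rw [hCK, hq] at key2
        push_cast at key2 ⊢
        linear_combination key2
      have := FPaux.step3 N L u 1 (3 * (N : ℤ) - 2 * K) ε hε hεL2 hu (by omega) (by omega) E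
      omega

lemma FPaux.eps_facts (K N : ℕ) (hK : 0 < K) (hN : N = 4 * K + 1) (ε' : ℝ)
    (hε' : ε' = (-(4 * (N : ℝ) ^ 3 + 2 * (K : ℝ) * (N : ℝ) - (N : ℝ) ^ 2 - 1)
        + Real.sqrt ((4 * (N : ℝ) ^ 3 + 2 * (K : ℝ) * (N : ℝ) - (N : ℝ) ^ 2 - 1) ^ 2
            + 16 * (N : ℝ) ^ 3)) / (8 * (N : ℝ) ^ 2))
    (ε : ℚ) (hε : ε = 1 / ((⌈1 / ε'⌉ : ℤ) : ℚ)) :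
    0 < ε ∧ 3 * (N : ℚ) ^ 2 * ε ≤ 1 := by
  have hN5 : 5 ≤ N := by omega
  have hNr : (5 : ℝ) ≤ (N : ℝ) := by exact_mod_cast hN5
  have hKr : (1 : ℝ) ≤ (K : ℝ) := by exact_mod_cast hK
  set β : ℝ := 4 * (N : ℝ) ^ 3 + 2 * (K : ℝ) * (N : ℝ) - (N : ℝ) ^ 2 - 1 with hβ
  have hβ3 : 3 * (N : ℝ) ^ 3 ≤ β := by rw [hβ]; nlinarith
  have hβpos : 0 < β := by nlinarith
  have hden : (0 : ℝ) < 8 * (N : ℝ) ^ 2 := by positivity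
  have hsq_lb : β < Real.sqrt (β ^ 2 + 16 * (N : ℝ) ^ 3) := by
    rw [show β ^ 2 + 16 * (N:ℝ)^3 = β^2 + 16*(N:ℝ)^3 from rfl]
    have h : β ^ 2 < β ^ 2 + 16 * (N : ℝ) ^ 3 := by nlinarith
    nlinarith [Real.sq_sqrt (by positivity : (0:ℝ) ≤ β ^ 2 + 16 * (N : ℝ) ^ 3),
      Real.sqrt_nonneg (β ^ 2 + 16 * (N : ℝ) ^ 3)]
  have hε'pos : 0 < ε' := by
    rw [hε']
    apply div_pos _ hden
    linarith
  have hsq_ub : Real.sqrt (β ^ 2 + 16 * (N : ℝ) ^ 3) ≤ β + 8 / 3 := by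
    have h1 : β ^ 2 + 16 * (N : ℝ) ^ 3 ≤ (β + 8 / 3) ^ 2 := by nlinarith
    calc Real.sqrt (β ^ 2 + 16 * (N : ℝ) ^ 3) ≤ Real.sqrt ((β + 8/3) ^ 2) :=
          Real.sqrt_le_sqrt h1
      _ = β + 8/3 := Real.sqrt_sq (by linarith)
  have hε'ub : ε' ≤ 1 / (3 * (N : ℝ) ^ 2) := by
    rw [hε']
    rw [div_le_div_iff₀ hden (by positivity)]
    have : -β + Real.sqrt (β ^ 2 + 16 * (N : ℝ) ^ 3) ≤ 8/3 := by linarith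
    nlinarith
  set m : ℤ := ⌈1 / ε'⌉ with hm
  have hmpos : 0 < m := by
    rw [hm]
    exact Int.ceil_pos.mpr (by positivity)
  have hmr : 1 / ε' ≤ (m : ℝ) := Int.le_ceil _
  have hmq : (0:ℚ) < (m:ℚ) := by exact_mod_cast hmpos
  have hmR : (0:ℝ) < (m:ℝ) := by exact_mod_cast hmpos
  have hεpos : 0 < ε := by
    rw [hε]
    exact one_div_pos.mpr hmq
  have hεcast : ((ε : ℚ) : ℝ) = 1 / (m : ℝ) := by
    rw [hε]; push_cast; ring
  have hεε' : ((ε : ℚ) : ℝ) ≤ ε' := by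
    rw [hεcast, div_le_iff₀ hmR]
    have h1 : 1 ≤ (m : ℝ) * ε' := by
      have := (div_le_iff₀ hε'pos).1 hmr
      linarith
    linarith
  refine ⟨hεpos, ?_⟩
  have hfin : ((3 * (N : ℚ) ^ 2 * ε : ℚ) : ℝ) ≤ 1 := by
    push_cast
    have h2 : 3 * (N:ℝ)^2 * ((ε:ℚ):ℝ) ≤ 3 * (N:ℝ)^2 * ε' :=
      mul_le_mul_of_nonneg_left hεε' (by positivity)
    have h3 : 3 * (N:ℝ)^2 * ε' ≤ 3 * (N:ℝ)^2 * (1 / (3 * (N:ℝ)^2)) :=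
      mul_le_mul_of_nonneg_left hε'ub (by positivity)
    have h4 : 3 * (N:ℝ)^2 * (1 / (3 * (N:ℝ)^2)) = 1 := by
      field_simp
    linarith
  exact_mod_cast hfin

lemma FPaux.forward (n N K L : ℕ) (hK : 0 < K) (hN : N = 4 * K + 1) (hn : 1 ≤ n)
    (h2n : 2 * n + 1 ≤ N) (hL : L + 4 * n = 5 * N + 1)
    (c : Fin n → ℕ) (hc : ∀ i, 0 < c i) (hcsum : ∑ i, c i = 2 * K)
    (ε δ : ℚ) (hδL : δ * (L : ℚ) = 2 * ε)
    (A B : Fin (2 * N + 2) → ℚ)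
    (hA : ∀ i : Fin (2 * N + 2),
      A i = if h : (i : ℕ) < n then (c ⟨(i : ℕ), h⟩ : ℚ)
        else if (i : ℕ) < n + (N + n - 1) then δ
        else if (i : ℕ) < 2 * N then 3 * δ / 2
        else (K : ℚ))
    (hB : ∀ i : Fin (2 * N + 2), B i = if (i : ℕ) < 2 * N then 1 else (N : ℚ) + ε)
    (J : Finset (Fin n)) (hJ : ∑ i ∈ J, c i = K) :
    ∃ I₁ I₂ : Finset (Fin (2 * N + 2)),
      I₁.Nonempty ∧ I₂.Nonempty ∧ Disjoint I₁ I₂ ∧ I₁ ∪ I₂ = Finset.univ ∧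
      (∑ i ∈ I₁, A i) / (∑ i ∈ I₁, B i) = (2 * (K : ℚ) + ε / 2) / (2 * (N : ℚ) + ε) ∧
      (∑ i ∈ I₂, A i) / (∑ i ∈ I₂, B i) = (2 * (K : ℚ) + ε / 2) / (2 * (N : ℚ) + ε) := by
  classical
  have hjn : J.card ≤ n := by
    have := Finset.card_le_univ J
    simpa using this
  have hjsum : J.card ≤ ∑ i ∈ J, c i := by
    calc J.card = ∑ _i ∈ J, 1 := by rw [Finset.card_eq_sum_ones]
      _ ≤ ∑ i ∈ J, c i := Finset.sum_le_sum (fun i _ => hc i)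
  have hjK : J.card ≤ K := by rw [hJ] at hjsum; exact hjsum
  have hcompl : ∑ i ∈ Jᶜ, c i = K := by
    have h := Finset.sum_add_sum_compl J c
    rw [hJ, hcsum] at h
    omega
  have hccard : Jᶜ.card ≤ K := by
    have h0 : Jᶜ.card ≤ ∑ i ∈ Jᶜ, c i := by
      calc Jᶜ.card = ∑ _i ∈ Jᶜ, 1 := by rw [Finset.card_eq_sum_ones]
        _ ≤ ∑ i ∈ Jᶜ, c i := Finset.sum_le_sum (fun i _ => hc i)
    rw [hcompl] at h0; exact h0
  have hcc : Jᶜ.card = n - J.card := by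
    rw [Finset.card_compl, Fintype.card_fin]
  have hnjK : n ≤ K + J.card := by omega
  set j := J.card with hj
  set b₀ : ℕ := 2 * K + 1 + 2 * j - 2 * n with hb₀
  set a₀ : ℕ := N - j - b₀ with ha₀
  have f1 : j + a₀ + b₀ = N := by omega
  have f2 : 4 * a₀ + 6 * b₀ = L := by omega
  have fd2 : n + a₀ ≤ n + (N + n - 1) := by omega
  have fd3 : n + (N + n - 1) + b₀ ≤ 2 * N := by omega
  set P : Fin (2 * N + 2) → Prop := fun i =>
    if h : (i : ℕ) < n then (⟨(i : ℕ), h⟩ : Fin n) ∈ J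
    else ((n ≤ (i : ℕ) ∧ (i : ℕ) < n + a₀)
      ∨ (n + (N + n - 1) ≤ (i : ℕ) ∧ (i : ℕ) < n + (N + n - 1) + b₀)
      ∨ (i : ℕ) = 2 * N) with hP
  set I₁ : Finset (Fin (2 * N + 2)) := Finset.univ.filter P with hI₁
  have hmem : ∀ i : Fin (2 * N + 2), i ∈ I₁ ↔ P i := by
    intro i; rw [hI₁]; simp
  -- components
  have compJ : Finset.univ.filter (fun j' : Fin n => FPaux.emb n N h2n j' ∈ I₁) = J := by
    ext j'
    simp only [Finset.mem_filter, Finset.mem_univ, true_and]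
    rw [hmem]
    have hlt : ((FPaux.emb n N h2n j' : Fin (2 * N + 2)) : ℕ) < n := j'.isLt
    rw [hP]
    simp only
    rw [dif_pos hlt]
    have he : (⟨((FPaux.emb n N h2n j' : Fin (2 * N + 2)) : ℕ), hlt⟩ : Fin n) = j' := by
      apply Fin.ext; rfl
    rw [he]
  have compa : I₁.filter (fun i : Fin (2*N+2) => n ≤ (i:ℕ) ∧ (i:ℕ) < n + (N + n - 1))
      = Finset.univ.filter (fun i : Fin (2*N+2) => n ≤ (i:ℕ) ∧ (i:ℕ) < n + a₀) := by
    ext i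
    simp only [Finset.mem_filter, Finset.mem_univ, true_and, hmem i, hP]
    by_cases h : (i : ℕ) < n
    · rw [dif_pos h]
      constructor
      · rintro ⟨-, hx⟩; omega
      · intro hx; exact absurd hx (by omega)
    · rw [dif_neg h]
      omega
  have compb : I₁.filter (fun i : Fin (2*N+2) =>
        n + (N + n - 1) ≤ (i:ℕ) ∧ (i:ℕ) < 2 * N)
      = Finset.univ.filter (fun i : Fin (2*N+2) =>
        n + (N + n - 1) ≤ (i:ℕ) ∧ (i:ℕ) < n + (N + n - 1) + b₀) := by
    ext i
    simp only [Finset.mem_filter, Finset.mem_univ, true_and, hmem i, hP]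
    by_cases h : (i : ℕ) < n
    · rw [dif_pos h]
      constructor
      · rintro ⟨-, hx⟩; omega
      · intro hx; exact absurd hx (by omega)
    · rw [dif_neg h]
      omega
  have compt : I₁.filter (fun i : Fin (2*N+2) => 2 * N ≤ (i:ℕ))
      = {(⟨2 * N, by omega⟩ : Fin (2 * N + 2))} := by
    ext i
    simp only [Finset.mem_filter, Finset.mem_univ, true_and, hmem i, hP,
      Finset.mem_singleton, Fin.ext_iff]
    by_cases h : (i : ℕ) < n
    · rw [dif_pos h]
      constructor
      · rintro ⟨-, hx⟩; omega
      · intro hx; exact absurd hx (by omega)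
    · rw [dif_neg h]
      omega
  -- cards
  have carda : (I₁.filter (fun i : Fin (2*N+2) =>
      n ≤ (i:ℕ) ∧ (i:ℕ) < n + (N + n - 1))).card = a₀ := by
    rw [compa, FPaux.card_filter_Ico (2*N+2) n (n + a₀) (by omega)]
    omega
  have cardb : (I₁.filter (fun i : Fin (2*N+2) =>
      n + (N + n - 1) ≤ (i:ℕ) ∧ (i:ℕ) < 2 * N)).card = b₀ := by
    rw [compb, FPaux.card_filter_Ico (2*N+2) (n + (N + n - 1)) (n + (N + n - 1) + b₀) (by omega)]
    omega
  have cardt : (I₁.filter (fun i : Fin (2*N+2) => 2 * N ≤ (i:ℕ))).card = 1 := by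
    rw [compt]; simp
  have cards : (I₁.filter (fun i : Fin (2*N+2) => (i:ℕ) < 2 * N)).card = N := by
    rw [FPaux.card_small n N h2n I₁, compJ, carda, cardb]
    omega
  -- sums over I₁
  have hsumJ : (∑ j' ∈ J, ((c j' : ℚ))) = (K : ℚ) := by
    rw [← Nat.cast_sum, hJ]
  have SA1 : ∑ i ∈ I₁, A i = 2 * (K : ℚ) + ε / 2 := by
    rw [FPaux.decompA n N K h2n c δ A hA I₁, compJ, carda, cardb, cardt, hsumJ]
    have hf2 : 4 * (a₀ : ℚ) + 6 * (b₀ : ℚ) = (L : ℚ) := by exact_mod_cast f2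
    push_cast
    linear_combination (δ / 4) * hf2 + (1 / 4) * hδL
  have SB1 : ∑ i ∈ I₁, B i = 2 * (N : ℚ) + ε := by
    rw [FPaux.decompB N ε B hB I₁, cards, cardt]
    push_cast
    ring
  -- sums over univ
  have compJu : Finset.univ.filter
      (fun j' : Fin n => FPaux.emb n N h2n j' ∈ (Finset.univ : Finset (Fin (2*N+2)))) =
      (Finset.univ : Finset (Fin n)) := by
    simp
  have cardau : ((Finset.univ : Finset (Fin (2*N+2))).filter (fun i : Fin (2*N+2) =>
      n ≤ (i:ℕ) ∧ (i:ℕ) < n + (N + n - 1))).card = N + n - 1 := by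
    rw [FPaux.card_filter_Ico (2*N+2) n (n + (N + n - 1)) (by omega)]
    omega
  have cardbu : ((Finset.univ : Finset (Fin (2*N+2))).filter (fun i : Fin (2*N+2) =>
      n + (N + n - 1) ≤ (i:ℕ) ∧ (i:ℕ) < 2 * N)).card = N + 1 - 2 * n := by
    have e : (Finset.univ : Finset (Fin (2*N+2))).filter (fun i : Fin (2*N+2) =>
        n + (N + n - 1) ≤ (i:ℕ) ∧ (i:ℕ) < 2 * N)
      = (Finset.univ : Finset (Fin (2*N+2))).filter (fun i : Fin (2*N+2) =>
        n + (N + n - 1) ≤ (i:ℕ) ∧ (i:ℕ) < 2 * N) := rfl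
    rw [FPaux.card_filter_Ico (2*N+2) (n + (N + n - 1)) (2 * N) (by omega)]
    omega
  have cardtu : ((Finset.univ : Finset (Fin (2*N+2))).filter (fun i : Fin (2*N+2) =>
      2 * N ≤ (i:ℕ))).card = 2 := by
    have e : (Finset.univ : Finset (Fin (2*N+2))).filter
        (fun i : Fin (2*N+2) => 2 * N ≤ (i:ℕ))
      = (Finset.univ : Finset (Fin (2*N+2))).filter
        (fun i : Fin (2*N+2) => 2 * N ≤ (i:ℕ) ∧ (i:ℕ) < 2 * N + 2) := by
      apply Finset.filter_congr
      intro i _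
      have := i.isLt
      constructor <;> (intro hx; omega)
    rw [e, FPaux.card_filter_Ico (2*N+2) (2*N) (2*N+2) (by omega)]
    omega
  have SAu : ∑ i ∈ (Finset.univ : Finset (Fin (2*N+2))), A i = 4 * (K : ℚ) + ε := by
    rw [FPaux.decompA n N K h2n c δ A hA Finset.univ, compJu, cardau, cardbu, cardtu]
    have hsumu : (∑ j' ∈ (Finset.univ : Finset (Fin n)), ((c j' : ℚ))) = 2 * (K : ℚ) := by
      rw [← Nat.cast_sum, hcsum]; push_cast; ring
    rw [hsumu]
    have hnat1 : (2 : ℕ) * (N + n - 1) + 3 * (N + 1 - 2 * n) = L := by omega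
    have hq1 : 2 * ((N + n - 1 : ℕ) : ℚ) + 3 * ((N + 1 - 2 * n : ℕ) : ℚ) = (L : ℚ) := by
      exact_mod_cast hnat1
    push_cast
    linear_combination (δ / 2) * hq1 + (1 / 2) * hδL
  have SBu : ∑ i ∈ (Finset.univ : Finset (Fin (2*N+2))), B i
      = 2 * (N : ℚ) + ((N : ℚ) + ε) * 2 := by
    rw [FPaux.decompB N ε B hB Finset.univ, cardtu]
    have e : ((Finset.univ : Finset (Fin (2*N+2))).filter
        (fun i : Fin (2*N+2) => (i:ℕ) < 2 * N)).card = 2 * N := by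
      have e2 : (Finset.univ : Finset (Fin (2*N+2))).filter
          (fun i : Fin (2*N+2) => (i:ℕ) < 2 * N)
        = (Finset.univ : Finset (Fin (2*N+2))).filter
          (fun i : Fin (2*N+2) => 0 ≤ (i:ℕ) ∧ (i:ℕ) < 2 * N) := by
        apply Finset.filter_congr
        intro i _
        constructor <;> (intro hx; omega)
      rw [e2, FPaux.card_filter_Ico (2*N+2) 0 (2*N) (by omega)]
      omega
    rw [e]
    push_cast
    ring
  -- I₂
  have hval1 : ((⟨2 * N, by omega⟩ : Fin (2 * N + 2)) : ℕ) = 2 * N := rfl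
  have hval2 : ((⟨2 * N + 1, by omega⟩ : Fin (2 * N + 2)) : ℕ) = 2 * N + 1 := rfl
  refine ⟨I₁, I₁ᶜ, ?_, ?_, disjoint_compl_right, Finset.union_compl I₁, ?_, ?_⟩
  · refine ⟨⟨2 * N, by omega⟩, ?_⟩
    rw [hmem, hP]
    simp only
    rw [dif_neg (by omega)]
    exact Or.inr (Or.inr trivial)
  · refine ⟨⟨2 * N + 1, by omega⟩, ?_⟩
    rw [Finset.mem_compl, hmem, hP]
    simp only
    rw [dif_neg (by omega)]
    omega
  · rw [SA1, SB1]
  · have SA2 : ∑ i ∈ I₁ᶜ, A i = 2 * (K : ℚ) + ε / 2 := by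
      have h := Finset.sum_add_sum_compl I₁ A
      rw [SA1, SAu] at h
      have hKN : (N : ℚ) = 4 * (K : ℚ) + 1 := by exact_mod_cast hN
      linarith
    have SB2 : ∑ i ∈ I₁ᶜ, B i = 2 * (N : ℚ) + ε := by
      have h := Finset.sum_add_sum_compl I₁ B
      rw [SB1, SBu] at h
      linarith
    rw [SA2, SB2]

lemma FPaux.backward (n N K L : ℕ) (hK : 0 < K) (hN : N = 4 * K + 1) (hn : 1 ≤ n)
    (h2n : 2 * n + 1 ≤ N) (hL : L + 4 * n = 5 * N + 1)
    (c : Fin n → ℕ) (hcsum : ∑ i, c i = 2 * K)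
    (ε δ : ℚ) (hε : 0 < ε) (hεsmall : 3 * (N : ℚ) ^ 2 * ε ≤ 1)
    (hδL : δ * (L : ℚ) = 2 * ε)
    (A B : Fin (2 * N + 2) → ℚ)
    (hA : ∀ i : Fin (2 * N + 2),
      A i = if h : (i : ℕ) < n then (c ⟨(i : ℕ), h⟩ : ℚ)
        else if (i : ℕ) < n + (N + n - 1) then δ
        else if (i : ℕ) < 2 * N then 3 * δ / 2
        else (K : ℚ))
    (hB : ∀ i : Fin (2 * N + 2), B i = if (i : ℕ) < 2 * N then 1 else (N : ℚ) + ε)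
    (I₁ I₂ : Finset (Fin (2 * N + 2)))
    (h1ne : I₁.Nonempty) (h2ne : I₂.Nonempty) (hdisj : Disjoint I₁ I₂)
    (huni : I₁ ∪ I₂ = Finset.univ)
    (hr1 : (∑ i ∈ I₁, A i) / (∑ i ∈ I₁, B i) = (2 * (K : ℚ) + ε / 2) / (2 * (N : ℚ) + ε))
    (hr2 : (∑ i ∈ I₂, A i) / (∑ i ∈ I₂, B i) = (2 * (K : ℚ) + ε / 2) / (2 * (N : ℚ) + ε)) :
    ∃ J : Finset (Fin n), ∑ i ∈ J, c i = K := by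
  classical
  have hBpos : ∀ i : Fin (2 * N + 2), 0 < B i := by
    intro i
    rw [hB i]
    split_ifs
    · norm_num
    · positivity
  have h2Npos : (0:ℚ) < 2 * (N : ℚ) + ε := by positivity
  have cardau : ((Finset.univ : Finset (Fin (2*N+2))).filter (fun i : Fin (2*N+2) =>
      n ≤ (i:ℕ) ∧ (i:ℕ) < n + (N + n - 1))).card = N + n - 1 := by
    rw [FPaux.card_filter_Ico (2*N+2) n (n + (N + n - 1)) (by omega)]
    omega
  have cardbu : ((Finset.univ : Finset (Fin (2*N+2))).filter (fun i : Fin (2*N+2) =>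
      n + (N + n - 1) ≤ (i:ℕ) ∧ (i:ℕ) < 2 * N)).card = N + 1 - 2 * n := by
    rw [FPaux.card_filter_Ico (2*N+2) (n + (N + n - 1)) (2 * N) (by omega)]
    omega
  have cardtu : ((Finset.univ : Finset (Fin (2*N+2))).filter (fun i : Fin (2*N+2) =>
      2 * N ≤ (i:ℕ))).card = 2 := by
    have e : (Finset.univ : Finset (Fin (2*N+2))).filter
        (fun i : Fin (2*N+2) => 2 * N ≤ (i:ℕ))
      = (Finset.univ : Finset (Fin (2*N+2))).filter
        (fun i : Fin (2*N+2) => 2 * N ≤ (i:ℕ) ∧ (i:ℕ) < 2 * N + 2) := by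
      apply Finset.filter_congr
      intro i _
      have := i.isLt
      constructor <;> (intro hx; omega)
    rw [e, FPaux.card_filter_Ico (2*N+2) (2*N) (2*N+2) (by omega)]
    omega
  have cardsu : ((Finset.univ : Finset (Fin (2*N+2))).filter (fun i : Fin (2*N+2) =>
      (i:ℕ) < 2 * N)).card = 2 * N := by
    have e2 : (Finset.univ : Finset (Fin (2*N+2))).filter
        (fun i : Fin (2*N+2) => (i:ℕ) < 2 * N)
      = (Finset.univ : Finset (Fin (2*N+2))).filter
        (fun i : Fin (2*N+2) => 0 ≤ (i:ℕ) ∧ (i:ℕ) < 2 * N) := by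
      apply Finset.filter_congr
      intro i _
      constructor <;> (intro hx; omega)
    rw [e2, FPaux.card_filter_Ico (2*N+2) 0 (2*N) (by omega)]
    omega
  -- per-part analysis
  have hpart : ∀ X : Finset (Fin (2 * N + 2)), X.Nonempty →
      (∑ i ∈ X, A i) / (∑ i ∈ X, B i) = (2 * (K : ℚ) + ε / 2) / (2 * (N : ℚ) + ε) →
      (X.filter (fun i : Fin (2*N+2) => 2 * N ≤ (i:ℕ))).card ≠ 0 ∧
      ((X.filter (fun i : Fin (2*N+2) => 2 * N ≤ (i:ℕ))).card = 1 →
        ∑ j ∈ Finset.univ.filter (fun j : Fin n => FPaux.emb n N h2n j ∈ X), c j = K) := by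
    intro X hXne hXr
    set CX : ℕ := ∑ j ∈ Finset.univ.filter (fun j : Fin n => FPaux.emb n N h2n j ∈ X), c j
      with hCX
    set aX : ℕ := (X.filter (fun i : Fin (2*N+2) =>
      n ≤ (i:ℕ) ∧ (i:ℕ) < n + (N + n - 1))).card with haX
    set bX : ℕ := (X.filter (fun i : Fin (2*N+2) =>
      n + (N + n - 1) ≤ (i:ℕ) ∧ (i:ℕ) < 2 * N)).card with hbX
    set tX : ℕ := (X.filter (fun i : Fin (2*N+2) => 2 * N ≤ (i:ℕ))).card with htX
    set sX : ℕ := (X.filter (fun i : Fin (2*N+2) => (i:ℕ) < 2 * N)).card with hsX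
    -- bounds
    have haXb : aX ≤ N + n - 1 := by
      have h := Finset.card_le_card (Finset.filter_subset_filter
        (fun i : Fin (2*N+2) => n ≤ (i:ℕ) ∧ (i:ℕ) < n + (N + n - 1)) (Finset.subset_univ X))
      rw [cardau] at h
      exact h
    have hbXb : bX ≤ N + 1 - 2 * n := by
      have h := Finset.card_le_card (Finset.filter_subset_filter
        (fun i : Fin (2*N+2) => n + (N + n - 1) ≤ (i:ℕ) ∧ (i:ℕ) < 2 * N)
        (Finset.subset_univ X))
      rw [cardbu] at h
      exact h
    have htXb : tX ≤ 2 := by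
      have h := Finset.card_le_card (Finset.filter_subset_filter
        (fun i : Fin (2*N+2) => 2 * N ≤ (i:ℕ)) (Finset.subset_univ X))
      rw [cardtu] at h
      exact h
    have hsXb : sX ≤ 2 * N := by
      have h := Finset.card_le_card (Finset.filter_subset_filter
        (fun i : Fin (2*N+2) => (i:ℕ) < 2 * N) (Finset.subset_univ X))
      rw [cardsu] at h
      exact h
    have hCXb : CX ≤ 2 * K := by
      rw [hCX, ← hcsum]
      exact Finset.sum_le_sum_of_subset (Finset.subset_univ _)
    -- nonemptiness gives s + t ≥ 1
    have hst : 1 ≤ sX + tX := by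
      obtain ⟨x, hx⟩ := hXne
      by_cases hxv : (x : ℕ) < 2 * N
      · have : x ∈ X.filter (fun i : Fin (2*N+2) => (i:ℕ) < 2 * N) :=
          Finset.mem_filter.2 ⟨hx, hxv⟩
        have := Finset.card_pos.2 ⟨x, this⟩
        omega
      · have : x ∈ X.filter (fun i : Fin (2*N+2) => 2 * N ≤ (i:ℕ)) :=
          Finset.mem_filter.2 ⟨hx, by omega⟩
        have := Finset.card_pos.2 ⟨x, this⟩
        omega
    -- sums
    have hSA := FPaux.decompA n N K h2n c δ A hA X
    have hSB := FPaux.decompB N ε B hB X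
    have hBXpos : (0:ℚ) < ∑ i ∈ X, B i := Finset.sum_pos (fun i _ => hBpos i) hXne
    have hcross : (∑ i ∈ X, A i) * (2 * (N : ℚ) + ε)
        = (2 * (K : ℚ) + ε / 2) * (∑ i ∈ X, B i) :=
      (div_eq_div_iff hBXpos.ne' h2Npos.ne').1 hXr
    have hsumc : (∑ j ∈ Finset.univ.filter (fun j : Fin n => FPaux.emb n N h2n j ∈ X),
        ((c j : ℚ))) = (CX : ℚ) := by
      rw [hCX]; push_cast; rfl
    rw [hSA, hSB, hsumc, ← haX, ← hbX, ← htX, ← hsX] at hcross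
    have master : ((L : ℚ) * CX + ε * (2 * aX + 3 * bX) + (L : ℚ) * K * tX)
        * (4 * (N : ℚ) + 2 * ε)
        = (4 * (K : ℚ) + ε) * ((L : ℚ) * sX + (L : ℚ) * N * tX + (L : ℚ) * ε * tX) := by
      linear_combination (2 * (L:ℚ)) * hcross
        - ((2 * (aX:ℚ) + 3 * (bX:ℚ)) * (2 * (N:ℚ) + ε)) * hδL
    have hu : 2 * aX + 3 * bX ≤ L := by omega
    have hres := FPaux.per_part n N K L hK hN hL hn ε hε hεsmall
      CX sX (2 * aX + 3 * bX) tX hCXb hsXb hu htXb (by push_cast at master ⊢; linarith [master])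
    constructor
    · intro ht0
      have := hres.1 ht0
      omega
    · intro ht1
      exact (hres.2 ht1).1
  have hp1 := hpart I₁ h1ne hr1
  have hp2 := hpart I₂ h2ne hr2
  -- t counts add to 2
  have htadd : (I₁.filter (fun i : Fin (2*N+2) => 2 * N ≤ (i:ℕ))).card
      + (I₂.filter (fun i : Fin (2*N+2) => 2 * N ≤ (i:ℕ))).card = 2 := by
    rw [← Finset.card_union_of_disjoint (Finset.disjoint_filter_filter hdisj),
      ← Finset.filter_union, huni, cardtu]
  have ht1 : (I₁.filter (fun i : Fin (2*N+2) => 2 * N ≤ (i:ℕ))).card = 1 := by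
    have := hp1.1
    have := hp2.1
    omega
  exact ⟨Finset.univ.filter (fun j : Fin n => FPaux.emb n N h2n j ∈ I₁), hp1.2 ht1⟩

/-- Reduction of the partition problem to fractional partition for `m = 2`:
with `N = 4K+1`, `ε = 1/⌈1/ε'⌉` (for the explicit `ε'`), `δ = 2ε/(5N−4n+1)`, and the
rational families `A, B` indexed by `Fin (2N+2)` given by
`A = (c_1,...,c_n, δ,...,δ (N+n−1 times), 3δ/2,...,3δ/2 (N−2n+1 times), K, K)` and
`B = (1,...,1 (2N times), N+ε, N+ε)`, there is a subset of the `c_i` summing to `K`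
iff `Fin (2N+2)` splits into two disjoint nonempty sets on each of which
`(∑ A)/(∑ B) = (2K+ε/2)/(2N+ε)`. -/
theorem partition_reduces_to_FP (n K : ℕ) (hK : 0 < K)
    (c : Fin n → ℕ) (hc : ∀ i, 0 < c i) (hcsum : ∑ i, c i = 2 * K)
    (N : ℕ) (hN : N = 4 * K + 1)
    (ε' : ℝ)
    (hε' : ε' = (-(4 * (N : ℝ) ^ 3 + 2 * (K : ℝ) * (N : ℝ) - (N : ℝ) ^ 2 - 1)
        + Real.sqrt ((4 * (N : ℝ) ^ 3 + 2 * (K : ℝ) * (N : ℝ) - (N : ℝ) ^ 2 - 1) ^ 2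
            + 16 * (N : ℝ) ^ 3)) / (8 * (N : ℝ) ^ 2))
    (ε : ℚ) (hε : ε = 1 / ((⌈1 / ε'⌉ : ℤ) : ℚ))
    (δ : ℚ) (hδ : δ = 2 * ε / (5 * (N : ℚ) - 4 * (n : ℚ) + 1))
    (A B : Fin (2 * N + 2) → ℚ)
    (hA : ∀ i : Fin (2 * N + 2),
      A i = if h : (i : ℕ) < n then (c ⟨(i : ℕ), h⟩ : ℚ)
        else if (i : ℕ) < n + (N + n - 1) then δ
        else if (i : ℕ) < 2 * N then 3 * δ / 2
        else (K : ℚ))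
    (hB : ∀ i : Fin (2 * N + 2),
      B i = if (i : ℕ) < 2 * N then 1 else (N : ℚ) + ε) :
    (∃ J : Finset (Fin n), ∑ i ∈ J, c i = K)
      ↔ ∃ I₁ I₂ : Finset (Fin (2 * N + 2)),
          I₁.Nonempty ∧ I₂.Nonempty ∧ Disjoint I₁ I₂ ∧ I₁ ∪ I₂ = Finset.univ ∧
          (∑ i ∈ I₁, A i) / (∑ i ∈ I₁, B i)
            = (2 * (K : ℚ) + ε / 2) / (2 * (N : ℚ) + ε) ∧
          (∑ i ∈ I₂, A i) / (∑ i ∈ I₂, B i)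
            = (2 * (K : ℚ) + ε / 2) / (2 * (N : ℚ) + ε) := by
  have hn : 1 ≤ n := by
    rcases Nat.eq_zero_or_pos n with h | h
    · subst h
      simp at hcsum
      omega
    · exact h
  have hn2K : n ≤ 2 * K := by
    have h1 : (Finset.univ : Finset (Fin n)).card = n := by simp
    have h2 : (Finset.univ : Finset (Fin n)).card ≤ ∑ i, c i := by
      calc (Finset.univ : Finset (Fin n)).card = ∑ _i : Fin n, 1 := by
            rw [Finset.card_eq_sum_ones]
        _ ≤ ∑ i, c i := Finset.sum_le_sum (fun i _ => hc i)
    omega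
  have h2n : 2 * n + 1 ≤ N := by omega
  set L : ℕ := 5 * N + 1 - 4 * n with hLdef
  have hL : L + 4 * n = 5 * N + 1 := by omega
  have hLq : (L : ℚ) = 5 * (N : ℚ) - 4 * (n : ℚ) + 1 := by
    have h : ((L : ℚ)) + 4 * (n : ℚ) = 5 * (N : ℚ) + 1 := by exact_mod_cast hL
    linarith
  have hLne : (L : ℚ) ≠ 0 := by
    rw [hLq]
    have h : (n : ℚ) ≤ 2 * (K : ℚ) := by exact_mod_cast hn2K
    have h2 : (N : ℚ) = 4 * (K : ℚ) + 1 := by exact_mod_cast hN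
    intro hcon
    nlinarith
  have hδ' : δ = 2 * ε / (L : ℚ) := by rw [hδ, hLq]
  have hδL : δ * (L : ℚ) = 2 * ε := by
    rw [hδ']
    field_simp
  obtain ⟨hεpos, hεsmall⟩ := FPaux.eps_facts K N hK hN ε' hε' ε hε
  constructor
  · rintro ⟨J, hJ⟩
    exact FPaux.forward n N K L hK hN hn h2n hL c hc hcsum ε δ hδL A B hA hB J hJ
  · rintro ⟨I₁, I₂, h1ne, h2ne, hdisj, huni, hr1, hr2⟩
    exact FPaux.backward n N K L hK hN hn h2n hL c hcsum ε δ hεpos hεsmall hδL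
      A B hA hB I₁ I₂ h1ne h2ne hdisj huni hr1 hr2
end

section
/- Let m ≥ 2 be an integer and let d_1,...,d_{3m} be positive integers with d_1+⋯+d_{3m} = mK for a positive integer K and K/4 < d_i < K/2 for every i. Let N = 2mK+1, ε' = (−(2mN³+mKN−1) + √((2mN³+mKN−1)² + 8mN³))/(4mN²), ε = 1/⌈1/ε'⌉, and δ = ε/(mN−3m). Define rational families A, B indexed by {1,...,m(N+1)}: A consists of d_1,...,d_{3m}, then δ repeated mN−3m times, then K repeated m times; B consists of 1 repeated mN times, then N+ε repeated m times. Then there exists a partition of {1,...,3m} into m pairwise disjoint subsets D_1,...,D_m with Σ_{i∈D_j} d_i = K for every j if and only if there exists a partition of {1,...,m(N+1)} into m pairwise disjoint nonempty subsets I_1,...,I_m with union {1,...,m(N+1)} such that (Σ_{i∈I_j} A_i)/(Σ_{i∈I_j} B_i) = (2K+ε/m)/(2N+ε) for every j = 1,...,m. -/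
open Finset

lemma aux_card_lt (M a : ℕ) (h : a ≤ M) :
    ((Finset.univ : Finset (Fin M)).filter (fun i : Fin M => (i : ℕ) < a)).card = a := by
  have himg : ((Finset.univ : Finset (Fin M)).filter (fun i : Fin M => (i : ℕ) < a)).image Fin.val
      = Finset.range a := by
    ext v
    simp only [Finset.mem_image, Finset.mem_filter, Finset.mem_univ, true_and, Finset.mem_range]
    constructor
    · rintro ⟨i, hi, rfl⟩; exact hi
    · intro hv; exact ⟨⟨v, lt_of_lt_of_le hv h⟩, hv, rfl⟩
  have h2 := Finset.card_image_of_injective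
    (((Finset.univ : Finset (Fin M)).filter (fun i : Fin M => (i : ℕ) < a))) (Fin.val_injective)
  rw [himg, Finset.card_range] at h2
  exact h2.symm

lemma aux_card_not_lt (M a : ℕ) (h : a ≤ M) :
    ((Finset.univ : Finset (Fin M)).filter (fun i : Fin M => ¬ (i : ℕ) < a)).card = M - a := by
  have := Finset.card_filter_add_card_filter_not (s := (Finset.univ : Finset (Fin M)))
    (p := fun i : Fin M => (i : ℕ) < a)
  rw [aux_card_lt M a h] at this
  simp only [Finset.card_univ, Fintype.card_fin] at this
  omega

lemma aux_card_between (M a b : ℕ) (h : b ≤ M) :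
    ((Finset.univ : Finset (Fin M)).filter (fun i : Fin M => ¬ (i : ℕ) < a ∧ (i : ℕ) < b)).card
      = b - a := by
  have himg : ((Finset.univ : Finset (Fin M)).filter
      (fun i : Fin M => ¬ (i : ℕ) < a ∧ (i : ℕ) < b)).image Fin.val = Finset.Ico a b := by
    ext v
    simp only [Finset.mem_image, Finset.mem_filter, Finset.mem_univ, true_and, Finset.mem_Ico]
    constructor
    · rintro ⟨i, hi, rfl⟩; omega
    · intro hv; exact ⟨⟨v, by omega⟩, by simp; omega, rfl⟩
  have h2 := Finset.card_image_of_injective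
    (((Finset.univ : Finset (Fin M)).filter (fun i : Fin M => ¬ (i : ℕ) < a ∧ (i : ℕ) < b)))
    (Fin.val_injective)
  rw [himg, Nat.card_Ico] at h2
  exact h2.symm

lemma arith_core (m K N q S t k n : ℤ)
    (hm : 2 ≤ m) (hK : 1 ≤ K) (hN : N = 2*m*K + 1)
    (hq : 2*m*N^2 < q)
    (hS0 : 0 ≤ S) (hSb : S ≤ m*K)
    (ht0 : 0 ≤ t) (htb : t ≤ m*(N-3))
    (hk0 : 0 ≤ k) (hkb : k ≤ m)
    (hn0 : 0 ≤ n) (hnb : n ≤ m*N)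
    (heq : (q*m*(N-3)*(S + k*K) + t)*(2*N*q+1)
      = (2*K*q*m+1)*(N-3)*(q*(n+k*N) + k)) :
    t = (N-3)*k ∧ n = N*k ∧ S = K*k := by
  have hN5 : 5 ≤ N := by nlinarith
  have hq0 : 0 < q := by nlinarith
  have hdvd1 : q ∣ (t - (N-3)*k) := by
    refine ⟨(N-3)*(2*K*q*m*(n+k*N)+2*K*m*k+n+k*N) - m*(N-3)*(S+k*K)*(2*N*q+1) - 2*N*t, ?_⟩
    linear_combination heq
  have ht1 : t = (N-3)*k := by
    have habs : |t - (N-3)*k| < q := by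
      rw [abs_lt]
      constructor <;> nlinarith
    have := Int.eq_zero_of_abs_lt_dvd hdvd1 habs
    linarith
  rw [ht1] at heq
  have hN3 : (N - 3 : ℤ) ≠ 0 := by omega
  have E2 : (q*m*(S+k*K)+k)*(2*N*q+1) = (2*K*q*m+1)*(q*(n+k*N)+k) := by
    apply mul_left_cancel₀ hN3
    linear_combination heq
  have E3 : 2*N*q*m*(S+k*K) + m*(S+k*K) + 2*N*k = 2*K*q*m*(n+k*N) + 2*K*m*k + (n+k*N) := by
    apply mul_left_cancel₀ (ne_of_gt hq0)
    linear_combination E2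
  have hdvd2 : q ∣ (m*(S+k*K) + 2*N*k - (2*K*m*k + (n+k*N))) := by
    refine ⟨2*K*m*(n+k*N) - 2*N*m*(S+k*K), ?_⟩
    linear_combination E3
  have E4 : m*(S+k*K) + 2*N*k = 2*K*m*k + (n+k*N) := by
    have habs : |m*(S+k*K) + 2*N*k - (2*K*m*k + (n+k*N))| < q := by
      rw [abs_lt]
      constructor <;> nlinarith
    have := Int.eq_zero_of_abs_lt_dvd hdvd2 habs
    linarith
  have E5 : N*(S+k*K) = K*(n+k*N) := by
    have h2qm : (2*q*m : ℤ) ≠ 0 := by positivity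
    apply mul_left_cancel₀ h2qm
    linear_combination E3 - E4
  have E6 : N*S = K*n := by linear_combination E5
  have hcop : IsCoprime (N:ℤ) K := ⟨1, -(2*m), by linarith⟩
  have hNn : N ∣ n := hcop.dvd_of_dvd_mul_left ⟨S, by linarith [E6]⟩
  obtain ⟨c, hc⟩ := hNn
  have hN0 : (N:ℤ) ≠ 0 := by omega
  have hSc : S = K*c := by
    apply mul_left_cancel₀ hN0
    linear_combination E6 + K*hc
  have hck : c = k := by
    have h1 : (m*K - N)*(c - k) = 0 := by
      rw [hSc, hc] at E4
      linear_combination E4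
    have h2 : (m*K - N : ℤ) ≠ 0 := by
      have : m*K - N < 0 := by nlinarith
      exact ne_of_lt this
    rcases mul_eq_zero.1 h1 with h | h
    · exact absurd h h2
    · linarith
  refine ⟨ht1, ?_, ?_⟩
  · rw [hc, hck]
  · rw [hSc, hck]

lemma ceil_bound (m K N : ℕ) (hm : 2 ≤ m) (hK : 1 ≤ K) (hN : N = 2*m*K+1)
    (ε' : ℝ)
    (hε' : ε' = (-(2 * (m : ℝ) * (N : ℝ) ^ 3 + (m : ℝ) * (K : ℝ) * (N : ℝ) - 1)
        + Real.sqrt ((2 * (m : ℝ) * (N : ℝ) ^ 3 + (m : ℝ) * (K : ℝ) * (N : ℝ) - 1) ^ 2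
            + 8 * (m : ℝ) * (N : ℝ) ^ 3)) / (4 * (m : ℝ) * (N : ℝ) ^ 2)) :
    2*(m:ℤ)*(N:ℤ)^2 < ⌈1/ε'⌉ := by
  have hm' : (2:ℝ) ≤ (m:ℝ) := by exact_mod_cast hm
  have hK' : (1:ℝ) ≤ (K:ℝ) := by exact_mod_cast hK
  have hN' : (N:ℝ) = 2*(m:ℝ)*(K:ℝ)+1 := by rw [hN]; push_cast; ring
  have hN5 : (5:ℝ) ≤ (N:ℝ) := by nlinarith
  have hN0 : (0:ℝ) ≤ (N:ℝ) := by positivity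
  have hm0 : (0:ℝ) ≤ (m:ℝ) := by positivity
  have hmN3 : (0:ℝ) ≤ (m:ℝ)*(N:ℝ)^3 := by positivity
  have hKN : (1:ℝ) ≤ (K:ℝ)*(N:ℝ) := by nlinarith
  have hmKN : (2:ℝ) ≤ (m:ℝ)*((K:ℝ)*(N:ℝ)) := by nlinarith
  set b : ℝ := 2 * (m : ℝ) * (N : ℝ) ^ 3 + (m : ℝ) * (K : ℝ) * (N : ℝ) - 1 with hb
  have hb0 : 0 ≤ b := by rw [hb]; nlinarith [hmN3, hmKN]
  set s : ℝ := Real.sqrt (b ^ 2 + 8 * (m : ℝ) * (N : ℝ) ^ 3) with hs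
  have hbs : b < s := by
    rw [hs]
    rw [Real.lt_sqrt hb0]
    nlinarith
  have hdpos : (0:ℝ) < 4 * (m : ℝ) * (N : ℝ) ^ 2 := by nlinarith
  have hε'pos : 0 < ε' := by
    rw [hε']
    apply div_pos _ hdpos
    linarith
  have hub : s < b + 2 := by
    rw [hs]
    rw [Real.sqrt_lt' (by linarith)]
    nlinarith [hmKN, hmN3]
  have hε'ub : ε' * (2*(m:ℝ)*(N:ℝ)^2) < 1 := by
    rw [hε']
    rw [div_mul_eq_mul_div, div_lt_one hdpos]
    nlinarith [mul_pos (show (0:ℝ) < 2 - (-b + s) by linarith) (show (0:ℝ) < 2*(m:ℝ)*(N:ℝ)^2 by nlinarith)]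
  have hlt : (2*(m:ℝ)*(N:ℝ)^2 : ℝ) < 1/ε' := by
    rw [lt_div_iff₀ hε'pos]
    linear_combination hε'ub
  exact Int.lt_ceil.mpr (show ((2*(m:ℤ)*(N:ℤ)^2 : ℤ) : ℝ) < 1/ε' by push_cast; exact hlt)

/-- Reduction of 3-partition to fractional partition: with `N = 2mK+1`,
`ε = 1/⌈1/ε'⌉` (for the explicit `ε'`), `δ = ε/(mN−3m)`, and the rational families
`A, B` indexed by `Fin (m(N+1))` given by
`A = (d_1,...,d_{3m}, δ,...,δ (mN−3m times), K,...,K (m times))` and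
`B = (1,...,1 (mN times), N+ε,...,N+ε (m times))`, the `d_i` admit a 3-partition into
`m` groups each summing to `K` iff `Fin (m(N+1))` splits into `m` pairwise disjoint
nonempty sets covering everything, on each of which `(∑ A)/(∑ B) = (2K+ε/m)/(2N+ε)`. -/
theorem threePartition_reduces_to_FP (m K : ℕ) (hm : 2 ≤ m) (hK : 0 < K)
    (d : Fin (3 * m) → ℕ) (hd : ∀ i, 0 < d i)
    (hdsum : ∑ i, d i = m * K)
    (hdbound : ∀ i, (K : ℚ) / 4 < (d i : ℚ) ∧ (d i : ℚ) < (K : ℚ) / 2)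
    (N : ℕ) (hN : N = 2 * m * K + 1)
    (ε' : ℝ)
    (hε' : ε' = (-(2 * (m : ℝ) * (N : ℝ) ^ 3 + (m : ℝ) * (K : ℝ) * (N : ℝ) - 1)
        + Real.sqrt ((2 * (m : ℝ) * (N : ℝ) ^ 3 + (m : ℝ) * (K : ℝ) * (N : ℝ) - 1) ^ 2
            + 8 * (m : ℝ) * (N : ℝ) ^ 3)) / (4 * (m : ℝ) * (N : ℝ) ^ 2))
    (ε : ℚ) (hε : ε = 1 / ((⌈1 / ε'⌉ : ℤ) : ℚ))
    (δ : ℚ) (hδ : δ = ε / ((m : ℚ) * (N : ℚ) - 3 * (m : ℚ)))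
    (A B : Fin (m * (N + 1)) → ℚ)
    (hA : ∀ i : Fin (m * (N + 1)),
      A i = if h : (i : ℕ) < 3 * m then (d ⟨(i : ℕ), h⟩ : ℚ)
        else if (i : ℕ) < m * N then δ
        else (K : ℚ))
    (hB : ∀ i : Fin (m * (N + 1)),
      B i = if (i : ℕ) < m * N then 1 else (N : ℚ) + ε) :
    (∃ D : Fin m → Finset (Fin (3 * m)),
        (∀ j k, j ≠ k → Disjoint (D j) (D k)) ∧
        (Finset.univ : Finset (Fin m)).biUnion D = Finset.univ ∧
        ∀ j, ∑ i ∈ D j, d i = K)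
      ↔ ∃ I : Fin m → Finset (Fin (m * (N + 1))),
          (∀ j, (I j).Nonempty) ∧
          (∀ j k, j ≠ k → Disjoint (I j) (I k)) ∧
          (Finset.univ : Finset (Fin m)).biUnion I = Finset.univ ∧
          ∀ j, (∑ i ∈ I j, A i) / (∑ i ∈ I j, B i)
            = (2 * (K : ℚ) + ε / (m : ℚ)) / (2 * (N : ℚ) + ε) := by
  -- ## shared setup
  have hK1 : 1 ≤ K := hK
  have hN5 : 5 ≤ N := by
    have h4 : 2*2*1 ≤ 2*m*K := Nat.mul_le_mul (Nat.mul_le_mul_left 2 hm) hK1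
    omega
  have hmN3eq : m*(N-3) + 3*m = m*N := by
    have h1 : N - 3 + 3 = N := by omega
    calc m*(N-3) + 3*m = m*((N-3)+3) := by ring
      _ = m*N := by rw [h1]
  have h3mN : 3*m ≤ m*N := by
    calc 3*m = m*3 := by ring
      _ ≤ m*N := Nat.mul_le_mul_left m (by omega)
  have hMsplit : m*(N+1) = m*N + m := by ring
  have h3mM : 3*m ≤ m*(N+1) := by omega
  have hq : 2*(m:ℤ)*(N:ℤ)^2 < ⌈1/ε'⌉ := ceil_bound m K N hm hK1 hN ε' hε'
  set qZ : ℤ := ⌈1/ε'⌉ with hqZdef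
  have hqpos : (0:ℤ) < qZ := by
    have h0 : (0:ℤ) ≤ 2*(m:ℤ)*(N:ℤ)^2 := by positivity
    linarith
  have hqQ : (0:ℚ) < (qZ:ℚ) := by exact_mod_cast hqpos
  have hmQ : ((m:ℚ)) ≠ 0 := by
    have : (0:ℚ) < (m:ℚ) := by exact_mod_cast (by omega : 0 < m)
    exact ne_of_gt this
  have hNQ5 : (5:ℚ) ≤ (N:ℚ) := by exact_mod_cast hN5
  have hNQ3 : ((N:ℚ)) - 3 ≠ 0 := by linarith
  have hmN3Q : ((m:ℚ) * (N:ℚ) - 3 * (m:ℚ)) ≠ 0 := by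
    have hm2 : (2:ℚ) ≤ (m:ℚ) := by exact_mod_cast hm
    have : ((m:ℚ) * (N:ℚ) - 3 * (m:ℚ)) = (m:ℚ) * ((N:ℚ) - 3) := by ring
    rw [this]
    exact mul_ne_zero hmQ hNQ3
  have hqe : (qZ:ℚ) * ε = 1 := by
    rw [hε]; field_simp
  have hε0 : 0 < ε := by rw [hε]; positivity
  have hδe : ((m:ℚ)*(N:ℚ) - 3*(m:ℚ)) * δ = ε := by
    rw [hδ]; field_simp
  have hδKm : ((N:ℚ) - 3) * δ = ε / (m:ℚ) := by
    rw [eq_div_iff hmQ]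
    linear_combination hδe
  -- the embedding of d-indices
  let emb : Fin (3*m) ↪ Fin (m*(N+1)) :=
    ⟨fun i => ⟨(i:ℕ), lt_of_lt_of_le i.isLt h3mM⟩, fun a b hab => by have h := congrArg Fin.val hab; exact Fin.ext (h : _)⟩
  have hembval : ∀ i : Fin (3*m), ((emb i : Fin (m*(N+1))) : ℕ) = (i:ℕ) := fun i => rfl
  have hAemb : ∀ i : Fin (3*m), A (emb i) = (d i : ℚ) := by
    intro i
    rw [hA (emb i), dif_pos (show ((emb i : Fin (m*(N+1))):ℕ) < 3*m from i.isLt)]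
    rfl
  have hBemb : ∀ i : Fin (3*m), B (emb i) = 1 := by
    intro i
    rw [hB (emb i), if_pos (show ((emb i : Fin (m*(N+1))):ℕ) < m*N from lt_of_lt_of_le i.isLt h3mN)]
  constructor
  · -- ## forward direction
    rintro ⟨D, hDdisj, hDcov, hDsum⟩
    have hDmem : ∀ i : Fin (3*m), ∃ j, i ∈ D j := by
      intro i
      have hmem : i ∈ Finset.univ.biUnion D := by rw [hDcov]; exact Finset.mem_univ i
      rcases Finset.mem_biUnion.1 hmem with ⟨j, _, hj⟩
      exact ⟨j, hj⟩
    choose jD hjD using hDmem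
    have hKQ : (0:ℚ) < (K:ℚ) := by exact_mod_cast hK
    have hsumQ : ∀ j, (∑ i ∈ D j, (d i : ℚ)) = (K:ℚ) := by
      intro j
      have hc : ((∑ i ∈ D j, d i : ℕ) : ℚ) = (K:ℚ) := by exact_mod_cast congrArg (fun n : ℕ => (n:ℚ)) (hDsum j)
      push_cast at hc
      exact hc
    have hDcard : ∀ j, (D j).card = 3 := by
      intro j
      have hne : (D j).Nonempty := by
        rw [Finset.nonempty_iff_ne_empty]
        intro hemp
        have := hsumQ j
        rw [hemp, Finset.sum_empty] at this
        exact absurd this.symm (ne_of_gt hKQ)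
      have hlt4 : ((D j).card : ℚ) * ((K:ℚ)/4) < K := by
        have h1 : ∑ _i ∈ D j, ((K:ℚ)/4) < ∑ i ∈ D j, (d i:ℚ) :=
          Finset.sum_lt_sum_of_nonempty hne (fun i _ => (hdbound i).1)
        rw [Finset.sum_const, nsmul_eq_mul, hsumQ j] at h1
        exact h1
      have hgt2 : (K:ℚ) < ((D j).card : ℚ) * ((K:ℚ)/2) := by
        have h1 : ∑ i ∈ D j, (d i:ℚ) < ∑ _i ∈ D j, ((K:ℚ)/2) :=
          Finset.sum_lt_sum_of_nonempty hne (fun i _ => (hdbound i).2)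
        rw [Finset.sum_const, nsmul_eq_mul, hsumQ j] at h1
        exact h1
      have h4 : (D j).card < 4 := by
        by_contra hcon
        push_neg at hcon
        have : (4:ℚ) ≤ ((D j).card:ℚ) := by exact_mod_cast hcon
        nlinarith
      have h2 : 2 < (D j).card := by
        by_contra hcon
        push_neg at hcon
        have : ((D j).card:ℚ) ≤ 2 := by exact_mod_cast hcon
        nlinarith
      omega
    have hjb : ∀ j : Fin m, (j:ℕ)*(N-3) + (N-3) ≤ m*(N-3) := by
      intro j
      have h1 : ((j:ℕ)+1)*(N-3) ≤ m*(N-3) := Nat.mul_le_mul_right _ (by have := j.isLt; omega)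
      have h2 : ((j:ℕ)+1)*(N-3) = (j:ℕ)*(N-3) + (N-3) := by ring
      omega
    have hmidd : ∀ j k : Fin m, (j:ℕ) < (k:ℕ) →
        3*m + (j:ℕ)*(N-3) + (N-3) ≤ 3*m + (k:ℕ)*(N-3) := by
      intro j k h
      have h1 : ((j:ℕ)+1)*(N-3) ≤ (k:ℕ)*(N-3) := Nat.mul_le_mul_right _ (by omega)
      have h2 : ((j:ℕ)+1)*(N-3) = (j:ℕ)*(N-3) + (N-3) := by ring
      omega
    let mid : Fin m → Finset (Fin (m*(N+1))) := fun j =>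
      (Finset.Ico (3*m + (j:ℕ)*(N-3)) (3*m + (j:ℕ)*(N-3) + (N-3))).attachFin
        (fun v hv => by
          rw [Finset.mem_Ico] at hv
          have := hjb j
          omega)
    let pt : Fin m → Fin (m*(N+1)) := fun j => ⟨m*N + (j:ℕ), by have := j.isLt; omega⟩
    let If : Fin m → Finset (Fin (m*(N+1))) := fun j => ((D j).map emb ∪ mid j) ∪ {pt j}
    have hmemv : ∀ (j : Fin m) (x : Fin (m*(N+1))), x ∈ If j ↔
        ((∃ i : Fin (3*m), i ∈ D j ∧ (i:ℕ) = (x:ℕ))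
          ∨ (3*m + (j:ℕ)*(N-3) ≤ (x:ℕ) ∧ (x:ℕ) < 3*m + (j:ℕ)*(N-3) + (N-3))
          ∨ (x:ℕ) = m*N + (j:ℕ)) := by
      intro j x
      simp only [If, Finset.mem_union, Finset.mem_map, Finset.mem_singleton, mid,
        Finset.mem_attachFin, Finset.mem_Ico, pt]
      constructor
      · rintro ((⟨i, hi, rfl⟩ | h) | rfl)
        · exact Or.inl ⟨i, hi, rfl⟩
        · exact Or.inr (Or.inl h)
        · exact Or.inr (Or.inr rfl)
      · rintro (⟨i, hi, hval⟩ | h | hval)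
        · exact Or.inl (Or.inl ⟨i, hi, Fin.ext (hval : _)⟩)
        · exact Or.inl (Or.inr h)
        · exact Or.inr (Fin.ext (hval : _))
    have hsub1 : ∀ (j : Fin m) (x : Fin (m*(N+1))), x ∈ (D j).map emb → (x:ℕ) < 3*m := by
      intro j x hx
      rcases Finset.mem_map.1 hx with ⟨i, _, rfl⟩
      exact i.isLt
    have hsub2 : ∀ (j : Fin m) (x : Fin (m*(N+1))), x ∈ mid j →
        3*m + (j:ℕ)*(N-3) ≤ (x:ℕ) ∧ (x:ℕ) < 3*m + (j:ℕ)*(N-3) + (N-3) := by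
      intro j x hx
      simp only [mid, Finset.mem_attachFin, Finset.mem_Ico] at hx
      exact hx
    have hdisj1 : ∀ j, Disjoint ((D j).map emb) (mid j) := by
      intro j
      rw [Finset.disjoint_left]
      intro x hx1 hx2
      have ha := hsub1 j x hx1
      have hb := hsub2 j x hx2
      omega
    have hdisj2 : ∀ j, Disjoint ((D j).map emb ∪ mid j) {pt j} := by
      intro j
      rw [Finset.disjoint_right]
      intro x hx2 hx1
      rw [Finset.mem_singleton] at hx2
      subst hx2
      have hptv : ((pt j : Fin (m*(N+1))):ℕ) = m*N + (j:ℕ) := rfl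
      have hjbj := hjb j
      rcases Finset.mem_union.1 hx1 with h | h
      · have := hsub1 j _ h; omega
      · have := hsub2 j _ h; omega
    have hmidcard : ∀ j, (mid j).card = N - 3 := by
      intro j
      rw [show (mid j).card = (Finset.Ico (3*m + (j:ℕ)*(N-3)) (3*m + (j:ℕ)*(N-3) + (N-3))).card
        from Finset.card_attachFin _ _, Nat.card_Ico]
      omega
    have hN3cast : ((N - 3 : ℕ) : ℚ) = (N:ℚ) - 3 := by
      rw [Nat.cast_sub (by omega)]
      norm_num
    have hAsum : ∀ j, ∑ x ∈ If j, A x = 2*(K:ℚ) + ε/(m:ℚ) := by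
      intro j
      show ∑ x ∈ ((D j).map emb ∪ mid j) ∪ {pt j}, A x = _
      rw [Finset.sum_union (hdisj2 j), Finset.sum_union (hdisj1 j), Finset.sum_map,
        Finset.sum_singleton]
      rw [show (∑ i ∈ D j, A (emb i)) = ∑ i ∈ D j, (d i:ℚ) from
        Finset.sum_congr rfl (fun i _ => hAemb i), hsumQ j]
      rw [show (∑ x ∈ mid j, A x) = ∑ _x ∈ mid j, δ from
        Finset.sum_congr rfl (fun x hx => by
          have h2 := hsub2 j x hx
          rw [hA x, dif_neg (by omega), if_pos (by have := hjb j; omega)])]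
      rw [Finset.sum_const, nsmul_eq_mul, hmidcard j, hN3cast]
      rw [show A (pt j) = (K:ℚ) from by
        rw [hA (pt j), dif_neg (by show ¬ (m*N + (j:ℕ) < 3*m); omega),
          if_neg (by show ¬ (m*N + (j:ℕ) < m*N); omega)]]
      linear_combination hδKm
    have hBsum : ∀ j, ∑ x ∈ If j, B x = 2*(N:ℚ) + ε := by
      intro j
      show ∑ x ∈ ((D j).map emb ∪ mid j) ∪ {pt j}, B x = _
      rw [Finset.sum_union (hdisj2 j), Finset.sum_union (hdisj1 j), Finset.sum_map,
        Finset.sum_singleton]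
      rw [show (∑ i ∈ D j, B (emb i)) = ∑ _i ∈ D j, (1:ℚ) from
        Finset.sum_congr rfl (fun i _ => hBemb i)]
      rw [show (∑ x ∈ mid j, B x) = ∑ _x ∈ mid j, (1:ℚ) from
        Finset.sum_congr rfl (fun x hx => by
          have h2 := hsub2 j x hx
          rw [hB x, if_pos (by have := hjb j; omega)])]
      rw [Finset.sum_const, Finset.sum_const, nsmul_eq_mul, nsmul_eq_mul,
        hmidcard j, hN3cast, hDcard j]
      rw [show B (pt j) = (N:ℚ) + ε from by
        rw [hB (pt j), if_neg (by show ¬ (m*N + (j:ℕ) < m*N); omega)]]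
      push_cast
      ring
    refine ⟨If, ?_, ?_, ?_, ?_⟩
    · intro j
      exact ⟨pt j, (hmemv j (pt j)).2 (Or.inr (Or.inr rfl))⟩
    · intro j k hjk
      rw [Finset.disjoint_left]
      intro x hxj hxk
      rw [hmemv] at hxj hxk
      have hjkv : (j:ℕ) ≠ (k:ℕ) := fun h => hjk (Fin.ext h)
      have hjbj := hjb j
      have hjbk := hjb k
      rcases hxj with ⟨i, hiD, hiv⟩ | hxj | hxj <;>
        rcases hxk with ⟨i2, hiD2, hiv2⟩ | hxk | hxk
      · have : i = i2 := Fin.ext (by omega)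
        subst this
        exact Finset.disjoint_left.1 (hDdisj j k hjk) hiD hiD2
      · have := i.isLt; omega
      · have := i.isLt; omega
      · have := i2.isLt; omega
      · rcases Nat.lt_or_ge (j:ℕ) (k:ℕ) with h | h
        · have := hmidd j k h; omega
        · have h2 : (k:ℕ) < (j:ℕ) := by omega
          have := hmidd k j h2; omega
      · omega
      · have := i2.isLt; omega
      · omega
      · exact hjkv (by omega)
    · rw [Finset.eq_univ_iff_forall]
      intro x
      rw [Finset.mem_biUnion]
      by_cases h1 : (x:ℕ) < 3*m
      · exact ⟨jD ⟨(x:ℕ), h1⟩, Finset.mem_univ _,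
          (hmemv _ x).2 (Or.inl ⟨⟨(x:ℕ), h1⟩, hjD _, rfl⟩)⟩
      by_cases h2 : (x:ℕ) < m*N
      · have h3 : 0 < N-3 := by omega
        set dv := ((x:ℕ)-3*m)/(N-3) with hdv
        have hdvm : dv < m := by
          rw [hdv, Nat.div_lt_iff_lt_mul h3]
          omega
        have hq1 : dv*(N-3) ≤ (x:ℕ)-3*m := by
          rw [hdv]; exact Nat.div_mul_le_self _ _
        have hq2 : (x:ℕ)-3*m < (dv+1)*(N-3) := by
          rw [← Nat.div_lt_iff_lt_mul h3, ← hdv]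
          omega
        have hexp : (dv+1)*(N-3) = dv*(N-3)+(N-3) := by ring
        refine ⟨⟨dv, hdvm⟩, Finset.mem_univ _,
          (hmemv ⟨dv, hdvm⟩ x).2 (Or.inr (Or.inl ⟨?_, ?_⟩))⟩
        · show 3*m + dv*(N-3) ≤ (x:ℕ)
          omega
        · show (x:ℕ) < 3*m + dv*(N-3) + (N-3)
          omega
      · refine ⟨⟨(x:ℕ)-m*N, by have := x.isLt; omega⟩, Finset.mem_univ _,
          (hmemv _ x).2 (Or.inr (Or.inr ?_))⟩
        show (x:ℕ) = m*N + ((x:ℕ)-m*N)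
        omega
    · intro j
      rw [hAsum j, hBsum j]
  · -- ## backward direction
    rintro ⟨I, hIne, hIdisj, hIcov, hIrat⟩
    let Dj : Fin m → Finset (Fin (3*m)) := fun j => Finset.univ.filter (fun i => emb i ∈ I j)
    let Sd : Fin m → ℕ := fun j => ∑ i ∈ Dj j, d i
    let sc : Fin m → ℕ := fun j => ((I j).filter (fun x : Fin (m*(N+1)) => (x:ℕ) < 3*m)).card
    let tc : Fin m → ℕ := fun j => ((I j).filter (fun x : Fin (m*(N+1)) => ¬ (x:ℕ) < 3*m ∧ (x:ℕ) < m*N)).card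
    let kc : Fin m → ℕ := fun j => ((I j).filter (fun x : Fin (m*(N+1)) => ¬ (x:ℕ) < m*N)).card
    have hfilter_eq : ∀ j, (I j).filter (fun x : Fin (m*(N+1)) => (x:ℕ) < 3*m) = (Dj j).map emb := by
      intro j
      ext x
      simp only [Finset.mem_filter, Finset.mem_map, Dj, Finset.mem_univ, true_and]
      constructor
      · rintro ⟨hxP, hx3⟩
        refine ⟨⟨(x:ℕ), hx3⟩, ?_, Fin.ext rfl⟩
        have hx : emb ⟨(x:ℕ), hx3⟩ = x := Fin.ext rfl
        rw [hx]
        exact hxP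
      · rintro ⟨i, hiP, rfl⟩
        exact ⟨hiP, i.isLt⟩
    have hAsum : ∀ j, ∑ x ∈ I j, A x = (Sd j : ℚ) + (tc j : ℚ)*δ + (kc j : ℚ)*(K:ℚ) := by
      intro j
      rw [← Finset.sum_filter_add_sum_filter_not (I j) (fun x : Fin (m*(N+1)) => (x:ℕ) < 3*m) A]
      rw [← Finset.sum_filter_add_sum_filter_not ((I j).filter (fun x : Fin (m*(N+1)) => ¬ (x:ℕ) < 3*m))
        (fun x : Fin (m*(N+1)) => (x:ℕ) < m*N) A]
      rw [Finset.filter_filter, Finset.filter_filter]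
      have e1 : ∑ x ∈ (I j).filter (fun x : Fin (m*(N+1)) => (x:ℕ) < 3*m), A x = (Sd j : ℚ) := by
        rw [hfilter_eq j, Finset.sum_map]
        rw [show (∑ i ∈ Dj j, A (emb i)) = ∑ i ∈ Dj j, (d i:ℚ) from
          Finset.sum_congr rfl (fun i _ => hAemb i)]
        exact (Nat.cast_sum _ _).symm
      have e2 : ∑ x ∈ (I j).filter (fun x : Fin (m*(N+1)) => ¬ (x:ℕ) < 3*m ∧ (x:ℕ) < m*N), A x
          = (tc j:ℚ) * δ := by
        rw [show (∑ x ∈ (I j).filter (fun x : Fin (m*(N+1)) => ¬ (x:ℕ) < 3*m ∧ (x:ℕ) < m*N), A x)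
            = ∑ _x ∈ (I j).filter (fun x : Fin (m*(N+1)) => ¬ (x:ℕ) < 3*m ∧ (x:ℕ) < m*N), δ from
          Finset.sum_congr rfl (fun x hx => by
            rw [Finset.mem_filter] at hx
            rw [hA x, dif_neg hx.2.1, if_pos hx.2.2])]
        rw [Finset.sum_const, nsmul_eq_mul]
      have e3 : ∑ x ∈ (I j).filter (fun x : Fin (m*(N+1)) => ¬ (x:ℕ) < 3*m ∧ ¬ (x:ℕ) < m*N), A x
          = (kc j:ℚ)*(K:ℚ) := by
        have hsame : (I j).filter (fun x : Fin (m*(N+1)) => ¬ (x:ℕ) < 3*m ∧ ¬ (x:ℕ) < m*N)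
            = (I j).filter (fun x : Fin (m*(N+1)) => ¬ (x:ℕ) < m*N) := by
          ext x
          simp only [Finset.mem_filter]
          constructor
          · rintro ⟨h1, h2⟩; exact ⟨h1, h2.2⟩
          · rintro ⟨h1, h2⟩; exact ⟨h1, by omega, h2⟩
        rw [hsame]
        rw [show (∑ x ∈ (I j).filter (fun x : Fin (m*(N+1)) => ¬ (x:ℕ) < m*N), A x)
            = ∑ _x ∈ (I j).filter (fun x : Fin (m*(N+1)) => ¬ (x:ℕ) < m*N), (K:ℚ) from
          Finset.sum_congr rfl (fun x hx => by
            rw [Finset.mem_filter] at hx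
            rw [hA x, dif_neg (by omega), if_neg hx.2])]
        rw [Finset.sum_const, nsmul_eq_mul]
      rw [e1, e2, e3]
      ring
    have hcard_split : ∀ j, ((I j).filter (fun x : Fin (m*(N+1)) => (x:ℕ) < m*N)).card = sc j + tc j := by
      intro j
      have hsp := Finset.card_filter_add_card_filter_not
        (s := (I j).filter (fun x : Fin (m*(N+1)) => (x:ℕ) < m*N)) (p := fun x : Fin (m*(N+1)) => (x:ℕ) < 3*m)
      rw [Finset.filter_filter, Finset.filter_filter] at hsp
      have g1 : (I j).filter (fun x : Fin (m*(N+1)) => (x:ℕ) < m*N ∧ (x:ℕ) < 3*m)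
          = (I j).filter (fun x : Fin (m*(N+1)) => (x:ℕ) < 3*m) := by
        ext x
        simp only [Finset.mem_filter]
        constructor
        · rintro ⟨h1, h2⟩; exact ⟨h1, h2.2⟩
        · rintro ⟨h1, h2⟩; exact ⟨h1, by omega, h2⟩
      have g2 : (I j).filter (fun x : Fin (m*(N+1)) => (x:ℕ) < m*N ∧ ¬ (x:ℕ) < 3*m)
          = (I j).filter (fun x : Fin (m*(N+1)) => ¬ (x:ℕ) < 3*m ∧ (x:ℕ) < m*N) := by
        ext x
        simp only [Finset.mem_filter]
        constructor
        · rintro ⟨h1, h2⟩; exact ⟨h1, h2.2, h2.1⟩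
        · rintro ⟨h1, h2⟩; exact ⟨h1, h2.2, h2.1⟩
      rw [g1, g2] at hsp
      exact hsp.symm
    have hBsum : ∀ j, ∑ x ∈ I j, B x = ((sc j : ℚ) + (tc j:ℚ)) + (kc j:ℚ)*((N:ℚ)+ε) := by
      intro j
      rw [← Finset.sum_filter_add_sum_filter_not (I j) (fun x : Fin (m*(N+1)) => (x:ℕ) < m*N) B]
      have f1 : ∑ x ∈ (I j).filter (fun x : Fin (m*(N+1)) => (x:ℕ) < m*N), B x
          = (((I j).filter (fun x : Fin (m*(N+1)) => (x:ℕ) < m*N)).card : ℚ) := by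
        rw [show (∑ x ∈ (I j).filter (fun x : Fin (m*(N+1)) => (x:ℕ) < m*N), B x)
            = ∑ _x ∈ (I j).filter (fun x : Fin (m*(N+1)) => (x:ℕ) < m*N), (1:ℚ) from
          Finset.sum_congr rfl (fun x hx => by
            rw [Finset.mem_filter] at hx
            rw [hB x, if_pos hx.2])]
        rw [Finset.sum_const, nsmul_eq_mul, mul_one]
      have f3 : ∑ x ∈ (I j).filter (fun x : Fin (m*(N+1)) => ¬ (x:ℕ) < m*N), B x = (kc j:ℚ)*((N:ℚ)+ε) := by
        rw [show (∑ x ∈ (I j).filter (fun x : Fin (m*(N+1)) => ¬ (x:ℕ) < m*N), B x)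
            = ∑ _x ∈ (I j).filter (fun x : Fin (m*(N+1)) => ¬ (x:ℕ) < m*N), ((N:ℚ)+ε) from
          Finset.sum_congr rfl (fun x hx => by
            rw [Finset.mem_filter] at hx
            rw [hB x, if_neg hx.2])]
        rw [Finset.sum_const, nsmul_eq_mul]
      rw [f1, f3, hcard_split j]
      push_cast
      ring
    have hBpos : ∀ j, 0 < ∑ x ∈ I j, B x := by
      intro j
      apply Finset.sum_pos _ (hIne j)
      intro x _
      rw [hB x]
      have hN0Q : (0:ℚ) ≤ (N:ℚ) := by positivity
      split
      · norm_num
      · linarith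
    have h2N : (0:ℚ) < 2*(N:ℚ) + ε := by linarith
    have hcross : ∀ j, ((Sd j : ℚ) + (tc j : ℚ)*δ + (kc j : ℚ)*(K:ℚ)) * (2*(N:ℚ)+ε) * (m:ℚ)
        = (2*(K:ℚ)*(m:ℚ)+ε) * (((sc j : ℚ) + (tc j:ℚ)) + (kc j:ℚ)*((N:ℚ)+ε)) := by
      intro j
      have h0 := hIrat j
      rw [div_eq_div_iff (ne_of_gt (hBpos j)) (ne_of_gt h2N)] at h0
      rw [hAsum j, hBsum j] at h0
      have hfix : (2*(K:ℚ)+ε/(m:ℚ))*(m:ℚ) = 2*(K:ℚ)*(m:ℚ)+ε := by field_simp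
      linear_combination (m:ℚ)*h0
        + (((sc j : ℚ) + (tc j:ℚ)) + (kc j:ℚ)*((N:ℚ)+ε))*hfix
    have hkeyQ : ∀ j, ((qZ:ℚ)*(m:ℚ)*((N:ℚ)-3)*((Sd j:ℚ) + (kc j:ℚ)*(K:ℚ)) + (tc j:ℚ))
          *(2*(N:ℚ)*(qZ:ℚ)+1)
        = (2*(K:ℚ)*(qZ:ℚ)*(m:ℚ)+1)*((N:ℚ)-3)
          *((qZ:ℚ)*(((sc j:ℚ)+(tc j:ℚ)) + (kc j:ℚ)*(N:ℚ)) + (kc j:ℚ)) := by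
      intro j
      have hc := hcross j
      linear_combination (qZ:ℚ)^2*((N:ℚ)-3)*hc
        + ((qZ:ℚ)*(m:ℚ)*(N:ℚ)*(K:ℚ)*(kc j:ℚ) - (qZ:ℚ)*(m:ℚ)*(N:ℚ)*(Sd j:ℚ)
          - 3*(qZ:ℚ)*(m:ℚ)*(K:ℚ)*(kc j:ℚ) + 3*(qZ:ℚ)*(m:ℚ)*(Sd j:ℚ)
          + (qZ:ℚ)*(N:ℚ)^2*(kc j:ℚ) + (qZ:ℚ)*(N:ℚ)*(kc j:ℚ)*ε - 3*(qZ:ℚ)*(N:ℚ)*(kc j:ℚ)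
          + (qZ:ℚ)*(N:ℚ)*(sc j:ℚ) - (qZ:ℚ)*(N:ℚ)*(tc j:ℚ) - 3*(qZ:ℚ)*(kc j:ℚ)*ε
          - (qZ:ℚ)*ε*(tc j:ℚ) - 3*(qZ:ℚ)*(sc j:ℚ) - 3*(qZ:ℚ)*(tc j:ℚ)
          + (N:ℚ)*(kc j:ℚ) - 3*(kc j:ℚ) - (tc j:ℚ))*hqe
        + (-(2*(qZ:ℚ)^2*(N:ℚ)*(tc j:ℚ)) - (qZ:ℚ)^2*ε*(tc j:ℚ))*hδe
    -- bounds for the integer core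
    have hSdb : ∀ j, Sd j ≤ m*K := by
      intro j
      calc Sd j ≤ ∑ i, d i := Finset.sum_le_sum_of_subset (Finset.subset_univ (Dj j))
        _ = m*K := hdsum
    have htcb : ∀ j, tc j ≤ m*(N-3) := by
      intro j
      have h1 : tc j ≤ ((Finset.univ : Finset (Fin (m*(N+1)))).filter
          (fun x : Fin (m*(N+1)) => ¬ (x:ℕ) < 3*m ∧ (x:ℕ) < m*N)).card :=
        Finset.card_le_card (Finset.filter_subset_filter _ (Finset.subset_univ (I j)))
      rw [aux_card_between (m*(N+1)) (3*m) (m*N) (by omega)] at h1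
      omega
    have hscb : ∀ j, sc j ≤ 3*m := by
      intro j
      have h1 : sc j ≤ ((Finset.univ : Finset (Fin (m*(N+1)))).filter
          (fun x : Fin (m*(N+1)) => (x:ℕ) < 3*m)).card :=
        Finset.card_le_card (Finset.filter_subset_filter _ (Finset.subset_univ (I j)))
      rw [aux_card_lt (m*(N+1)) (3*m) (by omega)] at h1
      exact h1
    have hkcb : ∀ j, kc j ≤ m := by
      intro j
      have h1 : kc j ≤ ((Finset.univ : Finset (Fin (m*(N+1)))).filter
          (fun x : Fin (m*(N+1)) => ¬ (x:ℕ) < m*N)).card :=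
        Finset.card_le_card (Finset.filter_subset_filter _ (Finset.subset_univ (I j)))
      rw [aux_card_not_lt (m*(N+1)) (m*N) (by omega)] at h1
      omega
    have hcore : ∀ j, (tc j : ℤ) = ((N:ℤ)-3)*(kc j) ∧ ((sc j : ℤ) + (tc j : ℤ)) = (N:ℤ)*(kc j)
        ∧ (Sd j : ℤ) = (K:ℤ)*(kc j) := by
      intro j
      have heqZ : ((qZ*(m:ℤ)*((N:ℤ)-3)*((Sd j:ℤ) + (kc j:ℤ)*(K:ℤ)) + (tc j:ℤ))
            *(2*(N:ℤ)*qZ+1) : ℤ)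
          = (2*(K:ℤ)*qZ*(m:ℤ)+1)*((N:ℤ)-3)
            *(qZ*(((sc j:ℤ)+(tc j:ℤ)) + (kc j:ℤ)*(N:ℤ)) + (kc j:ℤ)) := by
        have := hkeyQ j
        exact_mod_cast this
      have hco := arith_core (m:ℤ) (K:ℤ) (N:ℤ) qZ (Sd j) (tc j) (kc j) ((sc j : ℤ) + (tc j:ℤ))
        (by exact_mod_cast hm) (by exact_mod_cast hK1)
        (by exact_mod_cast hN) hq
        (by positivity) (by exact_mod_cast hSdb j)
        (by positivity) (by
          have := htcb j
          have h2 : ((m*(N-3) : ℕ) : ℤ) = (m:ℤ)*((N:ℤ)-3) := by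
            push_cast [Nat.cast_sub (by omega : 3 ≤ N)]
            ring
          calc (tc j : ℤ) ≤ ((m*(N-3) : ℕ) : ℤ) := by exact_mod_cast this
            _ = (m:ℤ)*((N:ℤ)-3) := h2)
        (by positivity) (by exact_mod_cast hkcb j)
        (by positivity) (by
          have h1 := hscb j
          have h2 := htcb j
          have h3 : sc j + tc j ≤ m*N := by omega
          exact_mod_cast h3)
        heqZ
      exact hco
    -- cardinalities
    have hIcard : ∀ j, (I j).card = sc j + tc j + kc j := by
      intro j
      have hsp := Finset.card_filter_add_card_filter_not
        (s := I j) (p := fun x : Fin (m*(N+1)) => (x:ℕ) < m*N)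
      rw [hcard_split j] at hsp
      show (I j).card = sc j + tc j
        + ((I j).filter (fun x : Fin (m*(N+1)) => ¬ (x:ℕ) < m*N)).card
      omega
    have hkc1 : ∀ j, 1 ≤ kc j := by
      intro j
      by_contra hcon
      push_neg at hcon
      have hk0 : kc j = 0 := by omega
      have hn0 : (sc j : ℤ) + (tc j : ℤ) = 0 := by
        have := (hcore j).2.1
        rw [hk0] at this
        simpa using this
      have : (I j).card = 0 := by
        have h1 : sc j = 0 := by omega
        have h2 : tc j = 0 := by omega
        rw [hIcard j, h1, h2, hk0]
      rcases hIne j with ⟨x, hx⟩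
      rw [Finset.card_eq_zero] at this
      rw [this] at hx
      exact absurd hx (Finset.notMem_empty x)
    have hsumcards : ∑ j, (I j).card = m*(N+1) := by
      have h1 := Finset.card_biUnion (s := (Finset.univ : Finset (Fin m))) (t := I)
        (fun x _ y _ hxy => hIdisj x y hxy)
      rw [hIcov] at h1
      rw [← h1]
      simp
    have hsumk : ∑ j, kc j = m := by
      have h1 : ∀ j, (I j).card = (N+1) * kc j := by
        intro j
        have hn : sc j + tc j = N * kc j := by
          have := (hcore j).2.1
          exact_mod_cast this
        rw [hIcard j, hn]
        ring
      have h2 : ∑ j, (I j).card = ∑ j, (N+1) * kc j := Finset.sum_congr rfl (fun j _ => h1 j)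
      rw [hsumcards, ← Finset.mul_sum] at h2
      have h3 : (N+1) * m = (N+1) * (∑ j, kc j) := by
        rw [← h2]
        ring
      exact (Nat.eq_of_mul_eq_mul_left (by omega) h3).symm
    have hkc_eq : ∀ j, kc j = 1 := by
      have h1 : (∑ _j : Fin m, 1) = ∑ j, kc j := by
        rw [hsumk]
        simp
      intro j
      have := (Finset.sum_eq_sum_iff_of_le (fun i _ => hkc1 i)).1 h1 j (Finset.mem_univ j)
      omega
    have hSdK : ∀ j, Sd j = K := by
      intro j
      have := (hcore j).2.2
      rw [hkc_eq j] at this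
      have h2 : (Sd j : ℤ) = (K:ℤ) := by simpa using this
      exact_mod_cast h2
    refine ⟨Dj, ?_, ?_, ?_⟩
    · intro j k hjk
      rw [Finset.disjoint_left]
      intro i hij hik
      simp only [Dj, Finset.mem_filter, Finset.mem_univ, true_and] at hij hik
      exact Finset.disjoint_left.1 (hIdisj j k hjk) hij hik
    · rw [Finset.eq_univ_iff_forall]
      intro i
      rw [Finset.mem_biUnion]
      have : emb i ∈ Finset.univ.biUnion I := by rw [hIcov]; exact Finset.mem_univ _
      rcases Finset.mem_biUnion.1 this with ⟨j, _, hj⟩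
      refine ⟨j, Finset.mem_univ _, ?_⟩
      simp only [Dj, Finset.mem_filter, Finset.mem_univ, true_and]
      exact hj
    · exact hSdK
end
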